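/- arXiv:1112.3689 — 7 statements merged into one kernel-verified Lean document; each statement's English description precedes it below -/
import Mathlib

section
/- The function h(x) = x + x^2(1 - e^{1/x}) is strictly increasing on (0, ∞). -/
open Real Set

lemma P_hasDeriv (t : ℝ) :
    HasDerivAt (fun t : ℝ => 1 + (t - 1) * Real.exp t) (t * Real.exp t) t := by
  have h := (((hasDerivAt_id t).sub_const 1).mul (Real.hasDerivAt_exp t)).const_add 1
  convert h using 1
  · rfl
  · rfl
  · rfl
  simp [id_eq]
  ring

lemma P_pos {t : ℝ} (ht : 0 < t) : 0 < 1 + (t - 1) * Real.exp t := by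
  have hmono : StrictMonoOn (fun t : ℝ => 1 + (t - 1) * Real.exp t) (Set.Ici 0) := by
    apply strictMonoOn_of_deriv_pos (convex_Ici 0)
    · exact fun x _ => (P_hasDeriv x).continuousAt.continuousWithinAt
    · intro x hx
      rw [interior_Ici] at hx
      rw [(P_hasDeriv x).deriv]
      exact mul_pos hx (Real.exp_pos x)
  have := hmono (Set.self_mem_Ici) (Set.mem_Ici.2 ht.le) ht
  simpa using this

lemma G_hasDeriv (t : ℝ) :
    HasDerivAt (fun t : ℝ => t + 2 + (t - 2) * Real.exp t) (1 + (t - 1) * Real.exp t) t := by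
  have h := (((hasDerivAt_id t).add_const 2).add
    (((hasDerivAt_id t).sub_const 2).mul (Real.hasDerivAt_exp t)))
  convert h using 1
  · rfl
  · rfl
  · rfl
  simp [id_eq]
  ring

lemma G_pos {t : ℝ} (ht : 0 < t) : 0 < t + 2 + (t - 2) * Real.exp t := by
  have hmono : StrictMonoOn (fun t : ℝ => t + 2 + (t - 2) * Real.exp t) (Set.Ici 0) := by
    apply strictMonoOn_of_deriv_pos (convex_Ici 0)
    · exact fun x _ => (G_hasDeriv x).continuousAt.continuousWithinAt
    · intro x hx
      rw [interior_Ici] at hx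
      rw [(G_hasDeriv x).deriv]
      exact P_pos hx
  have := hmono (Set.self_mem_Ici) (Set.mem_Ici.2 ht.le) ht
  simpa using this

lemma h_hasDeriv {x : ℝ} (hx : 0 < x) :
    HasDerivAt (fun x : ℝ => x + x ^ 2 * (1 - Real.exp (1 / x)))
      (x * (1 / x + 2 + (1 / x - 2) * Real.exp (1 / x))) x := by
  have hinv : HasDerivAt (fun y : ℝ => 1 / y) (-(x ^ 2)⁻¹) x := by
    simpa [one_div] using hasDerivAt_inv hx.ne'
  have hexp := hinv.exp
  have h2 := hexp.const_sub 1
  have h3 : HasDerivAt (fun y : ℝ => y ^ 2) (2 * x) x := by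
    simpa using hasDerivAt_pow 2 x
  have h5 := (hasDerivAt_id x).add (h3.mul h2)
  convert h5 using 1
  · rfl
  · rfl
  · rfl
  field_simp
  ring

theorem h_strictMonoOn :
    StrictMonoOn (fun x : ℝ => x + x ^ 2 * (1 - Real.exp (1 / x))) (Set.Ioi 0) := by
  apply strictMonoOn_of_deriv_pos (convex_Ioi 0)
  · exact fun x hx => (h_hasDeriv hx).continuousAt.continuousWithinAt
  · intro x hx
    rw [interior_Ioi] at hx
    rw [(h_hasDeriv hx).deriv]
    exact mul_pos hx (G_pos (one_div_pos.2 hx))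
end

section
/- For fixed y > 1, the function a ↦ y^{√a} · e^{−a(y^{1/√a} − 1)} is strictly increasing on (0, ∞). -/
open Real

lemma lemA {u : ℝ} (hu : 0 < u) : 0 < 1 - Real.exp u + u * Real.exp u := by
  have h := Real.add_one_lt_exp (x := -u) (by linarith)
  have h2 : Real.exp (-u) * Real.exp u = 1 := by
    rw [← Real.exp_add]; simp
  nlinarith [Real.exp_pos u, Real.exp_pos (-u)]

lemma lemB {u : ℝ} (hu : 0 < u) :
    2 * (Real.exp u - 1) < u * (1 + Real.exp u) := by
  set φ : ℝ → ℝ := fun v => v * (1 + Real.exp v) - 2 * (Real.exp v - 1) with hφ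
  have hderiv : ∀ v : ℝ, HasDerivAt φ (1 - Real.exp v + v * Real.exp v) v := by
    intro v
    have h1 : HasDerivAt (fun v : ℝ => v * (1 + Real.exp v))
        (1 * (1 + Real.exp v) + v * Real.exp v) v :=
      (hasDerivAt_id v).mul ((Real.hasDerivAt_exp v).const_add 1)
    have h2 : HasDerivAt (fun v : ℝ => 2 * (Real.exp v - 1)) (2 * Real.exp v) v :=
      ((Real.hasDerivAt_exp v).sub_const 1).const_mul 2
    have := h1.sub h2
    refine this.congr_deriv ?_
    ring
  have hmono : StrictMonoOn φ (Set.Ici 0) := by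
    apply strictMonoOn_of_deriv_pos (convex_Ici 0)
    · exact fun v _ => (hderiv v).continuousAt.continuousWithinAt
    · intro v hv
      rw [interior_Ici] at hv
      rw [(hderiv v).deriv]
      exact lemA hv
  have := hmono (Set.self_mem_Ici) (Set.mem_Ici.2 hu.le) hu
  simp only [hφ] at this
  simp only [Real.exp_zero] at this
  linarith

lemma lemG {L : ℝ} (hL : 0 < L) :
    StrictMonoOn (fun t : ℝ => t * L - t ^ 2 * (Real.exp (L * t⁻¹) - 1))
      (Set.Ioi 0) := by
  set G : ℝ → ℝ := fun t => t * L - t ^ 2 * (Real.exp (L * t⁻¹) - 1) with hG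
  have hderiv : ∀ t : ℝ, 0 < t → HasDerivAt G
      (L - (2 * t * (Real.exp (L * t⁻¹) - 1)
        + t ^ 2 * (Real.exp (L * t⁻¹) * (L * -(t ^ 2)⁻¹)))) t := by
    intro t ht
    have h1 : HasDerivAt (fun t : ℝ => t * L) L t := by
      simpa using (hasDerivAt_id t).mul_const L
    have hinv : HasDerivAt (fun t : ℝ => t⁻¹) (-(t ^ 2)⁻¹) t := hasDerivAt_inv ht.ne'
    have hexp : HasDerivAt (fun t : ℝ => Real.exp (L * t⁻¹) - 1)
        (Real.exp (L * t⁻¹) * (L * -(t ^ 2)⁻¹)) t :=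
      ((hinv.const_mul L).exp).sub_const 1
    have hsq : HasDerivAt (fun t : ℝ => t ^ 2) (2 * t) t := by
      simpa using hasDerivAt_pow 2 t
    exact h1.sub (hsq.mul hexp)
  apply strictMonoOn_of_deriv_pos (convex_Ioi 0)
  · exact fun t ht => (hderiv t ht).continuousAt.continuousWithinAt
  · intro t ht
    rw [interior_Ioi] at ht
    have ht' : (0:ℝ) < t := ht
    rw [(hderiv t ht').deriv]
    set E := Real.exp (L * t⁻¹) with hE
    have hu : 0 < L * t⁻¹ := mul_pos hL (inv_pos.2 ht')
    have key := lemB hu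
    have htL : t * (L * t⁻¹) = L := by field_simp
    have key2 : t * (2 * (E - 1)) < t * ((L * t⁻¹) * (1 + E)) :=
      mul_lt_mul_of_pos_left key ht'
    have key3 : 2 * t * (E - 1) < L * (1 + E) := by
      calc 2 * t * (E - 1) = t * (2 * (E - 1)) := by ring
        _ < t * ((L * t⁻¹) * (1 + E)) := key2
        _ = (t * (L * t⁻¹)) * (1 + E) := by ring
        _ = L * (1 + E) := by rw [htL]
    have hsimp : t ^ 2 * (E * (L * -(t ^ 2)⁻¹)) = -(E * L) := by
      have h2 : (t:ℝ) ^ 2 ≠ 0 := pow_ne_zero 2 ht'.ne'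
      field_simp
    rw [hsimp]
    linarith

theorem tail_strictMono_in_a (y : ℝ) (hy : 1 < y) :
    StrictMonoOn
      (fun a : ℝ => y ^ Real.sqrt a * Real.exp (-a * (y ^ (1 / Real.sqrt a) - 1)))
      (Set.Ioi 0) := by
  have hy0 : 0 < y := by linarith
  have hL : 0 < Real.log y := Real.log_pos hy
  set L := Real.log y with hLdef
  have hrepr : ∀ a : ℝ, 0 < a →
      y ^ Real.sqrt a * Real.exp (-a * (y ^ (1 / Real.sqrt a) - 1))
        = Real.exp ((Real.sqrt a) * L
            - (Real.sqrt a) ^ 2 * (Real.exp (L * (Real.sqrt a)⁻¹) - 1)) := by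
    intro a ha
    have hsa : 0 < Real.sqrt a := Real.sqrt_pos.2 ha
    have h1 : y ^ Real.sqrt a = Real.exp (Real.sqrt a * L) := by
      rw [Real.rpow_def_of_pos hy0]; rw [mul_comm]
    have h2 : y ^ (1 / Real.sqrt a) = Real.exp (L * (Real.sqrt a)⁻¹) := by
      rw [Real.rpow_def_of_pos hy0, one_div]
    rw [h1, h2, ← Real.exp_add]
    congr 1
    rw [Real.sq_sqrt ha.le]
    ring
  intro a ha b hb hab
  simp only [Set.mem_Ioi] at ha hb
  dsimp only
  rw [hrepr a ha, hrepr b hb]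
  apply Real.exp_lt_exp.2
  have hsa : Real.sqrt a ∈ Set.Ioi (0:ℝ) := Set.mem_Ioi.2 (Real.sqrt_pos.2 ha)
  have hsb : Real.sqrt b ∈ Set.Ioi (0:ℝ) := Set.mem_Ioi.2 (Real.sqrt_pos.2 hb)
  exact lemG hL hsa hsb (Real.sqrt_lt_sqrt ha.le hab)
end

section
/- For β > 0, the function a ↦ ∫_0^∞ (1+t)^{a+β√a} · (a t/(1+t)) · e^{−a t} dt is strictly increasing on (0, ∞). Equivalently, the Erlang C formula C(a+β√a, a) is strictly decreasing in a for fixed β > 0. -/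
open MeasureTheory Real Set Filter


lemma erlang_H_deriv_pos {u : ℝ} (hu : 0 < u) : 0 < 1 + Real.exp u * (u - 1) := by
  rcases le_or_gt 1 u with h | h
  · nlinarith [Real.exp_pos u]
  · have h1 : -u + 1 < Real.exp (-u) := Real.add_one_lt_exp (by linarith)
    have h2 : Real.exp u * (-u + 1) < Real.exp u * Real.exp (-u) := 
      mul_lt_mul_of_pos_left h1 (Real.exp_pos u)
    rw [← Real.exp_add, add_neg_cancel, Real.exp_zero] at h2
    nlinarith

lemma erlang_H_pos {u : ℝ} (hu : 0 < u) : 0 < u + 2 + Real.exp u * (u - 2) := by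
  have hd : ∀ v : ℝ, HasDerivAt (fun v : ℝ => v + 2 + Real.exp v * (v - 2))
      (1 + Real.exp v * (v - 1)) v := by
    intro v
    have h1 := (hasDerivAt_id v).add_const (2:ℝ)
    have h2 := (Real.hasDerivAt_exp v).mul ((hasDerivAt_id v).sub_const (2:ℝ))
    have h3 := h1.add h2
    refine h3.congr_deriv ?_
    simp only [id_eq]
    ring
  have hmono : StrictMonoOn (fun v : ℝ => v + 2 + Real.exp v * (v - 2)) (Set.Ici 0) := by
    refine strictMonoOn_of_hasDerivWithinAt_pos (f' := fun v => 1 + Real.exp v * (v - 1)) (convex_Ici 0) ?_ ?_ ?_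
    · exact (Continuous.continuousOn (by continuity))
    · intro v hv
      exact (hd v).hasDerivWithinAt
    · intro v hv
      rw [interior_Ici] at hv
      exact erlang_H_deriv_pos hv
  have h0 := hmono (self_mem_Ici) (mem_Ici.2 hu.le) hu
  norm_num [Real.exp_zero] at h0
  linarith

lemma erlang_G_hasDerivAt {w x : ℝ} (hx : 0 < x) :
    HasDerivAt (fun x : ℝ => x * w - x ^ 2 * (Real.exp (w / x) - 1))
      (x * (w / x + 2 + Real.exp (w / x) * (w / x - 2))) x := by
  have hinner : HasDerivAt (fun x : ℝ => w / x) (w * -(x ^ 2)⁻¹) x := by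
    simpa [div_eq_mul_inv, mul_comm] using (hasDerivAt_inv hx.ne').const_mul w
  have hE : HasDerivAt (fun x : ℝ => Real.exp (w / x))
      (Real.exp (w / x) * (w * -(x ^ 2)⁻¹)) x := hinner.exp
  have h2 : HasDerivAt (fun x : ℝ => x ^ 2) (2 * x) x := by
    simpa using hasDerivAt_pow 2 x
  have h3 := ((hasDerivAt_id x).mul_const w).sub (h2.mul (hE.sub_const 1))
  refine h3.congr_deriv ?_
  have hx2 : (x:ℝ) ^ 2 ≠ 0 := pow_ne_zero 2 hx.ne'
  field_simp
  ring

lemma erlang_G_strictMono {w : ℝ} (hw : 0 < w) :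
    StrictMonoOn (fun x : ℝ => x * w - x ^ 2 * (Real.exp (w / x) - 1)) (Set.Ioi 0) := by
  refine strictMonoOn_of_hasDerivWithinAt_pos
    (f' := fun x => x * (w / x + 2 + Real.exp (w / x) * (w / x - 2))) (convex_Ioi 0) ?_ ?_ ?_
  · refine ContinuousOn.sub (continuousOn_id.mul continuousOn_const) ?_
    refine ContinuousOn.mul ((continuous_pow 2).continuousOn) ?_
    refine ContinuousOn.sub ?_ continuousOn_const
    exact Real.continuous_exp.comp_continuousOn
      (continuousOn_const.div continuousOn_id (fun x hx => ne_of_gt hx))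
  · intro x hx
    rw [interior_Ioi] at hx
    exact (erlang_G_hasDerivAt hx).hasDerivWithinAt
  · intro x hx
    rw [interior_Ioi] at hx
    exact mul_pos hx (erlang_H_pos (div_pos hw hx))

/-- Gaussian-with-drift integrability on `Ioi 0`. -/
lemma erlang_integrable_gauss (b : ℝ) :
    IntegrableOn (fun w : ℝ => Real.exp (b * w - w ^ 2 / 2)) (Set.Ioi 0) := by
  have hg : Integrable (fun w : ℝ => Real.exp (b ^ 2) * Real.exp (-(4⁻¹ : ℝ) * w ^ 2)) :=
    (integrable_exp_neg_mul_sq (by norm_num)).const_mul _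
  refine Integrable.mono hg.integrableOn ?_ ?_
  · exact (Real.continuous_exp.comp (by continuity)).aestronglyMeasurable.restrict
  · refine Eventually.of_forall fun w => ?_
    rw [Real.norm_eq_abs, Real.norm_eq_abs, abs_of_pos (Real.exp_pos _), ← Real.exp_add,
      abs_of_pos (by positivity)]
    apply Real.exp_le_exp.2
    nlinarith [sq_nonneg (b - w / 2)]

lemma erlang_exp_bound {x w : ℝ} (hx : 0 < x) (hw : 0 ≤ w) :
    x * w - x ^ 2 * (Real.exp (w / x) - 1) ≤ -(w ^ 2) / 2 := by
  have h := Real.quadratic_le_exp_of_nonneg (x := w / x) (by positivity)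
  have hx2 : (0:ℝ) < x ^ 2 := by positivity
  have h2 : x ^ 2 * (1 + w / x + (w / x) ^ 2 / 2) ≤ x ^ 2 * Real.exp (w / x) :=
    mul_le_mul_of_nonneg_left h hx2.le
  have hxx : x ^ 2 * (w / x) = x * w := by field_simp
  have hxx2 : x ^ 2 * ((w / x) ^ 2 / 2) = w ^ 2 / 2 := by field_simp
  nlinarith [h2]

section
variable {β x : ℝ}

lemma erlang_cont_E (x : ℝ) : Continuous (fun w : ℝ => Real.exp (w / x)) :=
  Real.continuous_exp.comp (continuous_id.div_const x)

lemma erlang_cont_Phi (β x : ℝ) :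
    Continuous (fun w : ℝ => Real.exp (β * w + (x * w - x ^ 2 * (Real.exp (w / x) - 1)))) := by
  apply Real.continuous_exp.comp
  exact (continuous_const.mul continuous_id).add
    ((continuous_const.mul continuous_id).sub
      (continuous_const.mul ((erlang_cont_E x).sub continuous_const)))

lemma erlang_integrable_Phi (hx : 0 < x) :
    IntegrableOn (fun w : ℝ => Real.exp (β * w + (x * w - x ^ 2 * (Real.exp (w / x) - 1))))
      (Set.Ioi 0) := by
  refine Integrable.mono (erlang_integrable_gauss β) ((erlang_cont_Phi β x).aestronglyMeasurable.restrict) ?_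
  refine (ae_restrict_iff' measurableSet_Ioi).2 (Eventually.of_forall fun w hw => ?_)
  rw [Real.norm_eq_abs, Real.norm_eq_abs, abs_of_pos (Real.exp_pos _),
    abs_of_pos (Real.exp_pos _)]
  apply Real.exp_le_exp.2
  have := erlang_exp_bound hx (le_of_lt hw)
  linarith

lemma erlang_integrable_deriv (hβ : 0 < β) (hx : 0 < x) :
    IntegrableOn (fun w : ℝ => (β + x - x * Real.exp (w / x)) *
      Real.exp (β * w + (x * w - x ^ 2 * (Real.exp (w / x) - 1)))) (Set.Ioi 0) := by
  have hg : IntegrableOn (fun w : ℝ => (β + 2 * x) * Real.exp ((β + 1 / x) * w - w ^ 2 / 2))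
      (Set.Ioi 0) := (erlang_integrable_gauss (β + 1 / x)).const_mul _
  refine Integrable.mono hg ?_ ?_
  · exact (Continuous.mul (by exact (continuous_const.sub (continuous_const.mul (erlang_cont_E x))))
      (erlang_cont_Phi β x)).aestronglyMeasurable.restrict
  refine (ae_restrict_iff' measurableSet_Ioi).2 (Eventually.of_forall fun w hw => ?_)
  have hw0 : (0:ℝ) ≤ w := le_of_lt hw
  have hE1 : 1 ≤ Real.exp (w / x) := Real.one_le_exp (by positivity)
  rw [Real.norm_eq_abs, Real.norm_eq_abs, abs_mul, abs_of_pos (Real.exp_pos _)]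
  have h1 : |β + x - x * Real.exp (w / x)| ≤ (β + 2 * x) * Real.exp (w / x) := by
    rw [abs_le]
    constructor <;> nlinarith [Real.exp_pos (w / x)]
  have h2 : |(β + 2 * x) * Real.exp ((β + 1 / x) * w - w ^ 2 / 2)|
      = (β + 2 * x) * Real.exp ((β + 1 / x) * w - w ^ 2 / 2) := by
    rw [abs_mul, abs_of_pos (by positivity), abs_of_pos (Real.exp_pos _)]
  rw [h2]
  calc |β + x - x * Real.exp (w / x)| * Real.exp (β * w + (x * w - x ^ 2 * (Real.exp (w / x) - 1)))
      ≤ (β + 2 * x) * Real.exp (w / x) * Real.exp (β * w + (x * w - x ^ 2 * (Real.exp (w / x) - 1))) := by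
        apply mul_le_mul_of_nonneg_right h1 (Real.exp_pos _).le
    _ = (β + 2 * x) * Real.exp (w / x + (β * w + (x * w - x ^ 2 * (Real.exp (w / x) - 1)))) := by
        rw [mul_assoc, ← Real.exp_add]
    _ ≤ (β + 2 * x) * Real.exp ((β + 1 / x) * w - w ^ 2 / 2) := by
        apply mul_le_mul_of_nonneg_left _ (by positivity)
        apply Real.exp_le_exp.2
        have := erlang_exp_bound hx hw0
        have hswap : w / x = (1 / x) * w := by ring
        nlinarith [erlang_exp_bound hx hw0]

lemma erlang_Phi_hasDerivAt (β x : ℝ) (hx : 0 < x) (w : ℝ) :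
    HasDerivAt (fun w : ℝ => Real.exp (β * w + (x * w - x ^ 2 * (Real.exp (w / x) - 1))))
      ((β + x - x * Real.exp (w / x)) *
        Real.exp (β * w + (x * w - x ^ 2 * (Real.exp (w / x) - 1)))) w := by
  have hdiv : HasDerivAt (fun w : ℝ => w / x) (1 / x) w := by
    simpa using (hasDerivAt_id w).div_const x
  have hE : HasDerivAt (fun w : ℝ => Real.exp (w / x)) (Real.exp (w / x) * (1 / x)) w := hdiv.exp
  have h1 : HasDerivAt (fun w : ℝ => β * w) β w := by
    simpa using (hasDerivAt_id w).const_mul β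
  have h2 : HasDerivAt (fun w : ℝ => x * w) x w := by
    simpa using (hasDerivAt_id w).const_mul x
  have h3 : HasDerivAt (fun w : ℝ => x ^ 2 * (Real.exp (w / x) - 1))
      (x ^ 2 * (Real.exp (w / x) * (1 / x))) w := (hE.sub_const 1).const_mul (x ^ 2)
  have h4 := (h1.add (h2.sub h3)).exp
  convert h4 using 1
  · rfl
  have : x ^ 2 * (Real.exp (w / x) * (1 / x)) = x * Real.exp (w / x) := by
    field_simp
  rw [this]
  simp only [Pi.add_apply, Pi.sub_apply]
  ring

lemma erlang_Phi_tendsto (hβ : 0 < β) (hx : 0 < x) :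
    Tendsto (fun w : ℝ => Real.exp (β * w + (x * w - x ^ 2 * (Real.exp (w / x) - 1))))
      atTop (nhds 0) := by
  have hg : Tendsto (fun w : ℝ => Real.exp (β * w - w ^ 2 / 2)) atTop (nhds 0) := by
    apply Real.tendsto_exp_atBot.comp
    have t1 : Tendsto (fun w : ℝ => w * (w / 2 - β)) atTop atTop := by
      apply Tendsto.atTop_mul_atTop₀ tendsto_id
      apply tendsto_atTop_add_const_right
      exact tendsto_id.atTop_div_const (by norm_num)
    have t2 : Tendsto (fun w : ℝ => -(w * (w / 2 - β))) atTop atBot :=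
      tendsto_neg_atTop_atBot.comp t1
    convert t2 using 2 with w
    ring
  refine tendsto_of_tendsto_of_tendsto_of_le_of_le' tendsto_const_nhds hg ?_ ?_
  · exact Eventually.of_forall fun w => (Real.exp_pos _).le
  · filter_upwards [eventually_ge_atTop (0:ℝ)] with w hw
    apply Real.exp_le_exp.2
    have := erlang_exp_bound hx hw
    linarith

lemma erlang_deriv_integral (hβ : 0 < β) (hx : 0 < x) :
    ∫ w in Ioi (0:ℝ), (β + x - x * Real.exp (w / x)) *
      Real.exp (β * w + (x * w - x ^ 2 * (Real.exp (w / x) - 1))) = -1 := by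
  have h := integral_Ioi_of_hasDerivAt_of_tendsto
    (f := fun w : ℝ => Real.exp (β * w + (x * w - x ^ 2 * (Real.exp (w / x) - 1))))
    (f' := fun w : ℝ => (β + x - x * Real.exp (w / x)) *
      Real.exp (β * w + (x * w - x ^ 2 * (Real.exp (w / x) - 1))))
    ((erlang_cont_Phi β x).continuousWithinAt)
    (fun w _ => erlang_Phi_hasDerivAt β x hx w)
    (erlang_integrable_deriv hβ hx)
    (erlang_Phi_tendsto hβ hx)
  rw [h]
  norm_num

end

lemma erlang_repr {β x : ℝ} (hβ : 0 < β) (hx : 0 < x) :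
    ∫ t in Ioi (0:ℝ), (1 + t) ^ (x ^ 2 + β * x) * (x ^ 2 * t / (1 + t)) * Real.exp (-x ^ 2 * t)
      = 1 + β * ∫ w in Ioi (0:ℝ), Real.exp (β * w + (x * w - x ^ 2 * (Real.exp (w / x) - 1))) := by
  set φ : ℝ → ℝ := fun w => Real.exp (w / x) - 1 with hφ
  have himg : φ '' (Ioi 0) = Ioi 0 := by
    ext t
    constructor
    · rintro ⟨w, hw, rfl⟩
      have h1 : 1 < Real.exp (w / x) := by
        rw [show (1:ℝ) = Real.exp 0 by simp]
        exact Real.exp_lt_exp.2 (div_pos (mem_Ioi.1 hw) hx)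
      simp only [hφ, mem_Ioi]
      linarith
    · intro ht
      refine ⟨x * Real.log (1 + t), ?_, ?_⟩
      · exact mul_pos hx (Real.log_pos (by simpa using ht))
      · simp only [hφ]
        rw [mul_comm, mul_div_assoc, div_self hx.ne', mul_one,
          Real.exp_log (by linarith [mem_Ioi.1 ht])]
        ring
  have hinj : InjOn φ (Ioi 0) := by
    intro w1 _ w2 _ h
    simp only [hφ, sub_left_inj, Real.exp_eq_exp] at h
    field_simp at h
    exact h
  have hder : ∀ w ∈ Ioi (0:ℝ), HasDerivWithinAt φ (x⁻¹ * Real.exp (w / x)) (Ioi 0) w := by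
    intro w _
    have hdiv : HasDerivAt (fun w : ℝ => w / x) (1 / x) w := by
      simpa using (hasDerivAt_id w).div_const x
    have := (hdiv.exp.sub_const 1)
    have h2 : Real.exp (w / x) * (1 / x) = x⁻¹ * Real.exp (w / x) := by ring
    rw [h2] at this
    exact this.hasDerivWithinAt
  have hcv := integral_image_eq_integral_abs_deriv_smul measurableSet_Ioi hder hinj
    (fun t => (1 + t) ^ (x ^ 2 + β * x) * (x ^ 2 * t / (1 + t)) * Real.exp (-x ^ 2 * t))
  rw [himg] at hcv
  rw [hcv]
  have hptw : ∀ w ∈ Ioi (0:ℝ),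
      |x⁻¹ * Real.exp (w / x)| •
        ((1 + φ w) ^ (x ^ 2 + β * x) * (x ^ 2 * φ w / (1 + φ w)) * Real.exp (-x ^ 2 * φ w))
      = β * Real.exp (β * w + (x * w - x ^ 2 * (Real.exp (w / x) - 1)))
        - (β + x - x * Real.exp (w / x)) *
            Real.exp (β * w + (x * w - x ^ 2 * (Real.exp (w / x) - 1))) := by
    intro w _
    have hE : (0:ℝ) < Real.exp (w / x) := Real.exp_pos _
    have h1E : 1 + φ w = Real.exp (w / x) := by simp [hφ]
    rw [smul_eq_mul, h1E, abs_of_pos (by positivity)]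
    rw [Real.rpow_def_of_pos hE, Real.log_exp]
    have harg : w / x * (x ^ 2 + β * x) = x * w + β * w := by
      field_simp
    rw [harg]
    have hsplit : Real.exp (β * w + (x * w - x ^ 2 * (Real.exp (w / x) - 1)))
        = Real.exp (x * w + β * w) * Real.exp (-x ^ 2 * (Real.exp (w / x) - 1)) := by
      rw [← Real.exp_add]; ring_nf
    have hφw : φ w = Real.exp (w / x) - 1 := rfl
    rw [hsplit, hφw]
    have hneg : -x ^ 2 * (Real.exp (w / x) - 1) = -(x ^ 2 * (Real.exp (w / x) - 1)) := by ring
    field_simp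
    ring
  rw [setIntegral_congr_fun measurableSet_Ioi hptw]
  rw [integral_sub ((erlang_integrable_Phi hx).const_mul β) (erlang_integrable_deriv hβ hx),
    MeasureTheory.integral_const_mul, erlang_deriv_integral hβ hx]
  ring

lemma erlang_int_lt {β x₁ x₂ : ℝ} (h1 : 0 < x₁) (h12 : x₁ < x₂) :
    (∫ w in Ioi (0:ℝ), Real.exp (β * w + (x₁ * w - x₁ ^ 2 * (Real.exp (w / x₁) - 1))))
      < ∫ w in Ioi (0:ℝ), Real.exp (β * w + (x₂ * w - x₂ ^ 2 * (Real.exp (w / x₂) - 1))) := by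
  have h2 : 0 < x₂ := h1.trans h12
  have hptw : ∀ w ∈ Ioi (0:ℝ),
      Real.exp (β * w + (x₁ * w - x₁ ^ 2 * (Real.exp (w / x₁) - 1)))
        < Real.exp (β * w + (x₂ * w - x₂ ^ 2 * (Real.exp (w / x₂) - 1))) := by
    intro w hw
    exact Real.exp_lt_exp.2 (add_lt_add_right
      (erlang_G_strictMono (mem_Ioi.1 hw) (mem_Ioi.2 h1) (mem_Ioi.2 h2) h12) _)
  have hi1 : IntegrableOn (fun w : ℝ =>
      Real.exp (β * w + (x₁ * w - x₁ ^ 2 * (Real.exp (w / x₁) - 1)))) (Ioi 0) :=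
    erlang_integrable_Phi h1
  have hi2 : IntegrableOn (fun w : ℝ =>
      Real.exp (β * w + (x₂ * w - x₂ ^ 2 * (Real.exp (w / x₂) - 1)))) (Ioi 0) :=
    erlang_integrable_Phi h2
  have key : 0 < ∫ w in Ioi (0:ℝ),
      (Real.exp (β * w + (x₂ * w - x₂ ^ 2 * (Real.exp (w / x₂) - 1)))
        - Real.exp (β * w + (x₁ * w - x₁ ^ 2 * (Real.exp (w / x₁) - 1)))) := by
    rw [setIntegral_pos_iff_support_of_nonneg_ae]
    · refine lt_of_lt_of_le (b := volume (Ioi (0:ℝ))) ?_ (measure_mono ?_)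
      · rw [Real.volume_Ioi]
        exact ENNReal.zero_lt_top
      · intro w hw
        exact ⟨ne_of_gt (sub_pos.2 (hptw w hw)), hw⟩
    · refine (ae_restrict_iff' measurableSet_Ioi).2 (Eventually.of_forall fun w hw => ?_)
      exact sub_nonneg.2 (hptw w hw).le
    · exact hi2.sub hi1
  have hsub := integral_sub hi2 hi1
  rw [hsub] at key
  linarith

open MeasureTheory in
theorem erlangCInv_strictMono (β : ℝ) (hβ : 0 < β) :
    StrictMonoOn
      (fun a : ℝ => ∫ t in Set.Ioi (0 : ℝ),
        (1 + t) ^ (a + β * Real.sqrt a) * (a * t / (1 + t)) * Real.exp (-a * t))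
      (Set.Ioi 0) := by
  intro a ha b hb hab
  have ha' : 0 < a := mem_Ioi.1 ha
  have hb' : 0 < b := mem_Ioi.1 hb
  have hxa : 0 < Real.sqrt a := Real.sqrt_pos.2 ha'
  have hxb : 0 < Real.sqrt b := Real.sqrt_pos.2 hb'
  have hsa : Real.sqrt a ^ 2 = a := Real.sq_sqrt ha'.le
  have hsb : Real.sqrt b ^ 2 = b := Real.sq_sqrt hb'.le
  simp only []
  rw [← hsa, ← hsb]
  rw [show Real.sqrt (Real.sqrt a ^ 2) = Real.sqrt a by rw [hsa],
    show Real.sqrt (Real.sqrt b ^ 2) = Real.sqrt b by rw [hsb]]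
  rw [erlang_repr hβ hxa, erlang_repr hβ hxb]
  have hlt := erlang_int_lt (β := β) hxa (Real.sqrt_lt_sqrt ha'.le hab)
  have := mul_lt_mul_of_pos_left hlt hβ
  linarith
end

section
/- If 0 < a₁ < a₂ and β > 0, then the random variable Y_{a₂} = (1+X_{a₂})^{√a₂} stochastically dominates Y_{a₁} = (1+X_{a₁})^{√a₁}: for every y > 1, P(Y_{a₁} > y) < P(Y_{a₂} > y), where P(Y_a > y) = y^{√a} e^{−a(y^{1/√a}−1)}. -/
open Real Set

private lemma aux1 : ∀ u : ℝ, 0 < u → 0 < (u - 1) * Real.exp u + 1 := by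
  have hmono : StrictMonoOn (fun u : ℝ => (u - 1) * Real.exp u + 1) (Ici 0) := by
    apply strictMonoOn_of_deriv_pos (convex_Ici 0)
    · fun_prop
    · intro x hx
      rw [interior_Ici] at hx
      have h : HasDerivAt (fun u : ℝ => (u - 1) * Real.exp u + 1) (x * Real.exp x) x := by
        have := (((hasDerivAt_id x).sub_const 1).mul (Real.hasDerivAt_exp x)).add_const 1
        refine this.congr_deriv ?_
        simp only [id_eq]; ring
      rw [h.deriv]
      have hx' : (0:ℝ) < x := hx
      positivity
  intro u hu
  have := hmono self_mem_Ici (mem_Ici.mpr hu.le) hu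
  simpa using this

private lemma aux2 : ∀ u : ℝ, 0 < u →
    0 < u * Real.exp u - 2 * Real.exp u + u + 2 := by
  have hmono : StrictMonoOn (fun u : ℝ => u * Real.exp u - 2 * Real.exp u + u + 2) (Ici 0) := by
    apply strictMonoOn_of_deriv_pos (convex_Ici 0)
    · fun_prop
    · intro x hx
      rw [interior_Ici] at hx
      have h : HasDerivAt (fun u : ℝ => u * Real.exp u - 2 * Real.exp u + u + 2)
          ((x - 1) * Real.exp x + 1) x := by
        have := ((((hasDerivAt_id x).mul (Real.hasDerivAt_exp x)).sub
          ((Real.hasDerivAt_exp x).const_mul 2)).add (hasDerivAt_id x)).add_const 2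
        refine this.congr_deriv ?_
        simp only [id_eq]; ring
      rw [h.deriv]
      exact aux1 x hx
  intro u hu
  have := hmono self_mem_Ici (mem_Ici.mpr hu.le) hu
  simpa using this

private lemma Fmono (L : ℝ) (hL : 0 < L) :
    StrictMonoOn (fun s : ℝ => s * L - s ^ 2 * (Real.exp (L * s⁻¹) - 1)) (Ioi 0) := by
  apply strictMonoOn_of_deriv_pos (convex_Ioi 0)
  · apply continuousOn_of_forall_continuousAt
    intro x hx
    have hx' : x ≠ 0 := ne_of_gt hx
    fun_prop (disch := assumption)
  · intro x hx
    rw [interior_Ioi] at hx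
    have hx0 : x ≠ 0 := ne_of_gt hx
    have h2 : HasDerivAt (fun s : ℝ => L * s⁻¹) (L * (-(x ^ 2)⁻¹)) x :=
      (hasDerivAt_inv hx0).const_mul L
    have h3 := h2.exp
    have h5 : HasDerivAt (fun s : ℝ => s ^ 2) (2 * x) x := by
      simpa using hasDerivAt_pow 2 x
    have h6 := h5.mul (h3.sub_const 1)
    have hF : HasDerivAt (fun s : ℝ => s * L - s ^ 2 * (Real.exp (L * s⁻¹) - 1))
        (1 * L - (2 * x * (Real.exp (L * x⁻¹) - 1) +
          x ^ 2 * (Real.exp (L * x⁻¹) * (L * (-(x ^ 2)⁻¹))))) x :=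
      ((hasDerivAt_id x).mul_const L).sub h6
    rw [hF.deriv]
    have hxp : (0:ℝ) < x := hx
    have hu : 0 < L * x⁻¹ := by positivity
    have hg := aux2 _ hu
    have heq : 1 * L - (2 * x * (Real.exp (L * x⁻¹) - 1) +
          x ^ 2 * (Real.exp (L * x⁻¹) * (L * (-(x ^ 2)⁻¹)))) =
        L * ((L * x⁻¹) * Real.exp (L * x⁻¹) - 2 * Real.exp (L * x⁻¹) + (L * x⁻¹) + 2)
          / (L * x⁻¹) := by
      field_simp
      ring
    rw [heq]
    positivity

theorem tail_stochastic_order (a₁ a₂ : ℝ) (h1 : 0 < a₁) (h12 : a₁ < a₂)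
    (y : ℝ) (hy : 1 < y) :
    y ^ Real.sqrt a₁ * Real.exp (-a₁ * (y ^ (1 / Real.sqrt a₁) - 1)) <
      y ^ Real.sqrt a₂ * Real.exp (-a₂ * (y ^ (1 / Real.sqrt a₂) - 1)) := by
  have hy0 : (0:ℝ) < y := by linarith
  have hL : 0 < Real.log y := Real.log_pos hy
  have key : ∀ a : ℝ, 0 < a →
      y ^ Real.sqrt a * Real.exp (-a * (y ^ (1 / Real.sqrt a) - 1)) =
        Real.exp (Real.sqrt a * Real.log y - Real.sqrt a ^ 2 * (Real.exp (Real.log y * (Real.sqrt a)⁻¹) - 1)) := by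
    intro a ha
    rw [Real.rpow_def_of_pos hy0, Real.rpow_def_of_pos hy0, ← Real.exp_add]
    congr 1
    have hsq : Real.sqrt a ^ 2 = a := Real.sq_sqrt ha.le
    rw [one_div, hsq]
    ring
  rw [key a₁ h1, key a₂ (h1.trans h12), Real.exp_lt_exp]
  have hs1 : Real.sqrt a₁ ∈ Ioi (0:ℝ) := Real.sqrt_pos.mpr h1
  have hs2 : Real.sqrt a₂ ∈ Ioi (0:ℝ) := Real.sqrt_pos.mpr (h1.trans h12)
  exact Fmono (Real.log y) hL hs1 hs2 (Real.sqrt_lt_sqrt h1.le h12)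
end

section
/- For β > 0, the limit as a → ∞ of C(a+β√a, a) equals (1 + β·Φ(β)/φ(β))^{−1}, where Φ and φ are the standard normal CDF and density. -/
open Real Set MeasureTheory Filter


lemma aux_nonneg_of_deriv {f f' : ℝ → ℝ} (c : ℝ) (hf0 : f c = 0)
    (hd : ∀ x ∈ Set.Ioi c, HasDerivAt f (f' x) x)
    (hc : ContinuousOn f (Set.Ici c))
    (h0 : ∀ x ∈ Set.Ioi c, 0 ≤ f' x) : ∀ u, c ≤ u → 0 ≤ f u := by
  intro u hu
  have mono : MonotoneOn f (Set.Ici c) := by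
    apply monotoneOn_of_hasDerivWithinAt_nonneg (convex_Ici c) hc
    · intro x hx
      rw [interior_Ici] at hx
      exact ((hd x hx).hasDerivWithinAt)
    · intro x hx; rw [interior_Ici] at hx; exact h0 x hx
  have := mono (self_mem_Ici) hu hu
  rwa [hf0] at this

lemma log_le_lin (u : ℝ) (hu : 0 ≤ u) : Real.log (1 + u) ≤ u := by
  have := Real.log_le_sub_one_of_pos (by linarith : (0:ℝ) < 1 + u)
  linarith

lemma log_ge_quad (u : ℝ) (hu : 0 ≤ u) : u - u^2/2 ≤ Real.log (1 + u) := by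
  have key : ∀ v, 0 ≤ v → 0 ≤ Real.log (1 + v) - (v - v^2/2) := by
    apply aux_nonneg_of_deriv (f' := fun v => 1/(1+v) - (1 - v)) 0
    · simp
    · intro x hx
      have hx' : (0:ℝ) < 1 + x := by simp at hx; linarith
      have h1 : HasDerivAt (fun v : ℝ => Real.log (1 + v)) (1/(1+x)) x := by
        have := (Real.hasDerivAt_log hx'.ne').comp x ((hasDerivAt_id x).const_add 1)
        simpa [one_div, Function.comp_def] using this
      have h2 : HasDerivAt (fun v : ℝ => v - v^2/2) (1 - x) x := by
        have : HasDerivAt (fun v : ℝ => v - v^2/2) (1 - (2*x^1/2)) x := by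
          exact (hasDerivAt_id x).sub (((hasDerivAt_pow 2 x)).div_const 2)
        simpa using this
      exact h1.sub h2
    · apply ContinuousOn.sub
      · apply ContinuousOn.log (by fun_prop)
        intro x hx; simp at hx; positivity
      · fun_prop
    · intro x hx
      simp only [Set.mem_Ioi] at hx
      have hx' : (0:ℝ) < 1 + x := by linarith
      rw [div_sub' hx'.ne']
      apply div_nonneg _ hx'.le
      nlinarith
  linarith [key u hu]

lemma log_le_cubic (u : ℝ) (hu : 0 ≤ u) : Real.log (1 + u) ≤ u - u^2/2 + u^3/3 := by
  have key : ∀ v, 0 ≤ v → 0 ≤ (v - v^2/2 + v^3/3) - Real.log (1 + v) := by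
    apply aux_nonneg_of_deriv (f' := fun v => (1 - v + v^2) - 1/(1+v)) 0
    · simp
    · intro x hx
      have hx' : (0:ℝ) < 1 + x := by simp at hx; linarith
      have h1 : HasDerivAt (fun v : ℝ => Real.log (1 + v)) (1/(1+x)) x := by
        have := (Real.hasDerivAt_log hx'.ne').comp x ((hasDerivAt_id x).const_add 1)
        simpa [one_div, Function.comp_def] using this
      have h2 : HasDerivAt (fun v : ℝ => v - v^2/2 + v^3/3) (1 - x + x^2) x := by
        have : HasDerivAt (fun v : ℝ => v - v^2/2 + v^3/3)
            ((1 - (2*x^1)/2) + (3*x^2)/3) x := by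
          exact (((hasDerivAt_id x).sub ((hasDerivAt_pow 2 x).div_const 2)).add
            ((hasDerivAt_pow 3 x).div_const 3))
        convert this using 1; ring_nf
      exact h2.sub h1
    · apply ContinuousOn.sub (by fun_prop)
      apply ContinuousOn.log (by fun_prop)
      intro x hx; simp at hx; positivity
    · intro x hx
      simp only [Set.mem_Ioi] at hx
      have hx' : (0:ℝ) < 1 + x := by linarith
      rw [sub_div' hx'.ne']
      apply div_nonneg _ hx'.le
      nlinarith
  linarith [key u hu]

lemma log_le_mul_log2 (u : ℝ) (hu : 1 ≤ u) : Real.log (1 + u) ≤ u * Real.log 2 := by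
  have key : ∀ v, 1 ≤ v → 0 ≤ v * Real.log 2 - Real.log (1 + v) := by
    apply aux_nonneg_of_deriv (f' := fun v => Real.log 2 - 1/(1+v)) 1
    · norm_num
    · intro x hx
      have hx1 : (1:ℝ) < x := hx
      have hx' : (0:ℝ) < 1 + x := by linarith
      have h1 : HasDerivAt (fun v : ℝ => Real.log (1 + v)) (1/(1+x)) x := by
        have := (Real.hasDerivAt_log hx'.ne').comp x ((hasDerivAt_id x).const_add 1)
        simpa [one_div, Function.comp_def] using this
      have h2 : HasDerivAt (fun v : ℝ => v * Real.log 2) (Real.log 2) x := by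
        simpa using (hasDerivAt_id x).mul_const (Real.log 2)
      exact h2.sub h1
    · apply ContinuousOn.sub (by fun_prop)
      apply ContinuousOn.log (by fun_prop)
      intro x hx; simp only [Set.mem_Ici] at hx; positivity
    · intro x hx
      simp only [Set.mem_Ioi] at hx
      have hx' : (0:ℝ) < 1 + x := by linarith
      have h2 : 1/(1+x) ≤ 1/2 := by
        rw [div_le_div_iff₀ hx' (by norm_num)]; linarith
      have h3 : (0.6931471803 : ℝ) < Real.log 2 := Real.log_two_gt_d9
      linarith
  linarith [key u hu]

lemma intg_exp (b c : ℝ) (hb : 0 < b) :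
    Integrable (fun x : ℝ => Real.exp (c*x - b*x^2)) := by
  have h1 : Integrable (fun x : ℝ => Real.exp (-b*x^2)) := integrable_exp_neg_mul_sq hb
  have h2 := (h1.comp_sub_right (c/(2*b))).const_mul (Real.exp (c^2/(4*b)))
  apply h2.congr
  filter_upwards with x
  rw [← Real.exp_add]
  congr 1
  field_simp
  ring

lemma intg_x_exp (b c : ℝ) (hb : 0 < b) :
    IntegrableOn (fun x : ℝ => x * Real.exp (c*x - b*x^2)) (Ioi 0) := by
  apply Integrable.mono' ((intg_exp b (c+1) hb).restrict (s := Ioi 0))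
  · apply (measurable_id.mul ((measurable_id.const_mul c |>.sub
      ((measurable_id.pow_const 2).const_mul b)).exp)).aestronglyMeasurable
  · filter_upwards [ae_restrict_mem measurableSet_Ioi] with x hx
    simp only [Set.mem_Ioi] at hx
    rw [Real.norm_eq_abs, abs_of_nonneg (by positivity)]
    have hxe : x ≤ Real.exp x := (Real.add_one_le_exp x).trans' (by linarith)
    calc x * Real.exp (c*x - b*x^2) ≤ Real.exp x * Real.exp (c*x - b*x^2) := by
          apply mul_le_mul_of_nonneg_right hxe (Real.exp_nonneg _)
      _ = Real.exp ((c+1)*x - b*x^2) := by rw [← Real.exp_add]; ring_nf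

lemma integral_Ioi_sub (f : ℝ → ℝ) (c d : ℝ) :
    ∫ x in Ioi c, f (x - d) = ∫ x in Ioi (c - d), f x := by
  have A : MeasurableEmbedding (fun x : ℝ => x + (-d)) :=
    (Homeomorph.addRight (-d)).isClosedEmbedding.measurableEmbedding
  have B := MeasurableEmbedding.setIntegral_map (μ := volume) A f (Ioi (c - d))
  rw [map_add_right_eq_self (volume : Measure ℝ) (-d)] at B
  rw [B, preimage_add_const_Ioi]
  simp [sub_eq_add_neg]

lemma exp_quad_tendsto_zero (β : ℝ) :
    Tendsto (fun x : ℝ => Real.exp (β*x - x^2/2)) atTop (nhds 0) := by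
  have h1 : Tendsto (fun x : ℝ => β*x - x^2/2) atTop atBot := by
    have : (fun x : ℝ => β*x - x^2/2) = (fun x : ℝ => x * (β - x/2)) := by
      funext x; ring
    rw [this]
    apply Tendsto.atTop_mul_atBot₀ tendsto_id
    apply tendsto_atBot_add_const_left
    have h2 : Tendsto (fun x : ℝ => x/2) atTop atTop :=
      tendsto_id.atTop_div_const (by norm_num)
    exact tendsto_neg_atTop_atBot.comp h2
  exact Real.tendsto_exp_atBot.comp h1

lemma intg_shift_exp (β : ℝ) (hβ : 0 < β) :
    IntegrableOn (fun x : ℝ => (x - β) * Real.exp (β*x - x^2/2)) (Ioi 0) := by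
  have hb : (0:ℝ) < 1/2 := by norm_num
  have h1 := intg_x_exp (1/2) β hb
  have h2 := ((intg_exp (1/2) β hb).restrict (s := Ioi 0)).const_mul β
  apply Integrable.mono' (h1.add h2)
  · apply Measurable.aestronglyMeasurable
    exact ((measurable_id.sub_const β).mul
      ((measurable_id.const_mul β |>.sub ((measurable_id.pow_const 2).div_const 2)).exp))
  · filter_upwards [ae_restrict_mem measurableSet_Ioi] with x hx
    simp only [Set.mem_Ioi] at hx
    rw [Real.norm_eq_abs, abs_mul, abs_of_nonneg (Real.exp_nonneg _)]
    have h3 : |x - β| ≤ x + β := by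
      rw [abs_le]; constructor <;> linarith
    have h4 : (1:ℝ)/2 * x^2 = x^2/2 := by ring
    simp only [Pi.add_apply, h4]
    nlinarith [Real.exp_nonneg (β*x - x^2/2), abs_nonneg (x - β)]

lemma part_A (β : ℝ) (hβ : 0 < β) :
    ∫ x in Ioi (0:ℝ), (x - β) * Real.exp (β*x - x^2/2) = 1 := by
  have hderiv : ∀ x ∈ Ioi (0:ℝ),
      HasDerivAt (fun y => -Real.exp (β*y - y^2/2)) ((x - β) * Real.exp (β*x - x^2/2)) x := by
    intro x _
    have hg : HasDerivAt (fun y : ℝ => β*y - y^2/2) (β - x) x := by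
      have h := ((hasDerivAt_id x).const_mul β).sub ((hasDerivAt_pow 2 x).div_const 2)
      simp only [id] at h
      exact h.congr_deriv (by push_cast; ring)
    have := (hg.exp).neg
    exact this.congr_deriv (by ring)
  have hcont : ContinuousWithinAt (fun y => -Real.exp (β*y - y^2/2)) (Ici 0) 0 := by
    apply Continuous.continuousWithinAt; fun_prop
  have htend : Tendsto (fun y => -Real.exp (β*y - y^2/2)) atTop (nhds 0) := by
    simpa using (exp_quad_tendsto_zero β).neg
  have := integral_Ioi_of_hasDerivAt_of_tendsto hcont hderiv (intg_shift_exp β hβ) htend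
  simp only [mul_zero, zero_sub, neg_neg] at this
  rw [this]
  norm_num

lemma part_B (β : ℝ) (hβ : 0 < β) :
    ∫ x in Ioi (0:ℝ), Real.exp (β*x - x^2/2) =
      Real.exp (β^2/2) * ∫ t in Iic β, Real.exp (-t^2/2) := by
  have step1 : ∫ x in Ioi (0:ℝ), Real.exp (β*x - x^2/2)
      = ∫ x in Ioi (0:ℝ), Real.exp (β^2/2) * Real.exp (-(x-β)^2/2) := by
    apply setIntegral_congr_fun measurableSet_Ioi
    intro x _
    dsimp only
    rw [← Real.exp_add]
    congr 1
    ring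
  rw [step1, integral_const_mul]
  congr 1
  have step2 : ∫ x in Ioi (0:ℝ), Real.exp (-(x-β)^2/2)
      = ∫ x in Ioi (0 - β), Real.exp (-x^2/2) :=
    integral_Ioi_sub (fun u => Real.exp (-u^2/2)) 0 β
  rw [step2, zero_sub]
  have step3 : ∫ x in Ioi (-β), Real.exp (-x^2/2)
      = ∫ x in Ioi (-β), (fun t => Real.exp (-t^2/2)) (-x) := by
    apply setIntegral_congr_fun measurableSet_Ioi
    intro x _
    dsimp only
    rw [neg_sq]
  rw [step3, integral_comp_neg_Ioi (-β) (fun t => Real.exp (-t^2/2)), neg_neg]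

lemma value_eq (β : ℝ) (hβ : 0 < β) :
    ∫ x in Ioi (0:ℝ), x * Real.exp (β*x - x^2/2) =
    1 + β * (∫ t in Iic β, Real.exp (-t^2/2) / Real.sqrt (2*Real.pi)) /
      (Real.exp (-β^2/2) / Real.sqrt (2*Real.pi)) := by
  have hb : (0:ℝ) < 1/2 := by norm_num
  have hIB : IntegrableOn (fun x : ℝ => β * Real.exp (β*x - x^2/2)) (Ioi 0) := by
    have h := ((intg_exp (1/2) β hb).restrict (s := Ioi 0)).const_mul β
    apply h.congr
    filter_upwards with x
    congr 2
    ring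
  have split : ∫ x in Ioi (0:ℝ), x * Real.exp (β*x - x^2/2)
      = (∫ x in Ioi (0:ℝ), (x - β) * Real.exp (β*x - x^2/2))
        + ∫ x in Ioi (0:ℝ), β * Real.exp (β*x - x^2/2) := by
    rw [← integral_add (intg_shift_exp β hβ) hIB]
    apply setIntegral_congr_fun measurableSet_Ioi
    intro x _
    ring
  rw [split, part_A β hβ, integral_const_mul, part_B β hβ]
  congr 1
  have hsq : Real.sqrt (2*Real.pi) ≠ 0 := by positivity
  have hdiv : ∫ t in Iic β, Real.exp (-t^2/2) / Real.sqrt (2*Real.pi)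
      = (∫ t in Iic β, Real.exp (-t^2/2)) / Real.sqrt (2*Real.pi) := integral_div _ _
  rw [hdiv]
  have he : Real.exp (β^2/2) * Real.exp (-β^2/2) = 1 := by
    rw [← Real.exp_add]; ring_nf; exact Real.exp_zero
  field_simp
  rw [neg_div] at he
  linear_combination (∫ t in Iic β, Real.exp (-(t^2/2))) * he

lemma sqrt_tendsto_atTop : Tendsto Real.sqrt atTop atTop := by
  apply tendsto_atTop_atTop_of_monotone (fun x y h => Real.sqrt_le_sqrt h)
  intro b
  exact ⟨b^2, by rw [Real.sqrt_sq_eq_abs]; exact le_abs_self b⟩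

noncomputable def Gfun (β : ℝ) (a : ℝ) (x : ℝ) : ℝ :=
  Real.exp ((a + β * Real.sqrt a) * Real.log (1 + x / Real.sqrt a) - Real.sqrt a * x) *
    (x / (1 + x / Real.sqrt a))

lemma integral_eq_G (β : ℝ) (a : ℝ) (ha : 1 ≤ a) :
    (∫ t in Ioi (0:ℝ),
        (1 + t) ^ (a + β * Real.sqrt a) * (a * t / (1 + t)) * Real.exp (-a * t))
      = ∫ x in Ioi (0:ℝ), Gfun β a x := by
  have ha0 : (0:ℝ) < a := by linarith
  have hr : (0:ℝ) < Real.sqrt a := Real.sqrt_pos.mpr ha0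
  have hrr : Real.sqrt a * Real.sqrt a = a := Real.mul_self_sqrt ha0.le
  set f : ℝ → ℝ := fun t =>
    (1 + t) ^ (a + β * Real.sqrt a) * (a * t / (1 + t)) * Real.exp (-a * t) with hf
  have hb : (0:ℝ) < (Real.sqrt a)⁻¹ := inv_pos.mpr hr
  have hcv := integral_comp_mul_left_Ioi f 0 hb
  rw [mul_zero, inv_inv] at hcv
  have : (∫ t in Ioi (0:ℝ), f t) = (Real.sqrt a)⁻¹ • ∫ x in Ioi (0:ℝ), f ((Real.sqrt a)⁻¹ * x) := by
    rw [hcv, smul_smul, inv_mul_cancel₀ hr.ne', one_smul]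
  rw [this, ← integral_smul]
  apply setIntegral_congr_fun measurableSet_Ioi
  intro x hx
  simp only [Set.mem_Ioi] at hx
  have hu : (Real.sqrt a)⁻¹ * x = x / Real.sqrt a := by ring
  have hupos : 0 < x / Real.sqrt a := div_pos hx hr
  have h1u : (0:ℝ) < 1 + x / Real.sqrt a := by linarith
  simp only [smul_eq_mul, hf, hu]
  rw [Real.rpow_def_of_pos h1u]
  rw [show -a * (x / Real.sqrt a) = -(Real.sqrt a * x) by
    field_simp; nlinarith [hrr]]
  unfold Gfun
  rw [Real.exp_sub, Real.exp_neg, mul_comm (Real.log (1 + x / Real.sqrt a)) (a + β * Real.sqrt a),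
    div_eq_mul_inv (Real.exp _)]
  have key : (Real.sqrt a)⁻¹ * (a * (x / Real.sqrt a)) = x := by
    field_simp
    rw [Real.sq_sqrt ha0.le]
  calc (Real.sqrt a)⁻¹ *
        (Real.exp ((a + β * Real.sqrt a) * Real.log (1 + x / Real.sqrt a)) *
          (a * (x / Real.sqrt a) / (1 + x / Real.sqrt a)) * (Real.exp (Real.sqrt a * x))⁻¹)
      = Real.exp ((a + β * Real.sqrt a) * Real.log (1 + x / Real.sqrt a)) *
          (Real.exp (Real.sqrt a * x))⁻¹ *
          ((Real.sqrt a)⁻¹ * (a * (x / Real.sqrt a)) / (1 + x / Real.sqrt a)) := by ring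
    _ = _ := by rw [key]

lemma G_tendsto (β x : ℝ) (hx : 0 < x) :
    Tendsto (fun a => Gfun β a x) atTop (nhds (Real.exp (β*x - x^2/2) * x)) := by
  have hsq : Tendsto (fun a : ℝ => Real.sqrt a) atTop atTop := sqrt_tendsto_atTop
  have hu0 : Tendsto (fun a : ℝ => x / Real.sqrt a) atTop (nhds 0) :=
    tendsto_const_nhds.div_atTop hsq
  have hfrac : Tendsto (fun a : ℝ => x / (1 + x / Real.sqrt a)) atTop (nhds x) := by
    have h1 : Tendsto (fun a : ℝ => 1 + x / Real.sqrt a) atTop (nhds 1) := by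
      simpa using tendsto_const_nhds.add hu0
    have := (tendsto_const_nhds : Tendsto (fun _ : ℝ => x) atTop (nhds x)).div h1 (one_ne_zero)
    rw [div_one] at this
    exact this
  -- T1
  have hT1 : Tendsto (fun a : ℝ => a * (Real.log (1 + x / Real.sqrt a) - x / Real.sqrt a))
      atTop (nhds (-x^2/2)) := by
    have hup : Tendsto (fun a : ℝ => -x^2/2 + x^3 / (3 * Real.sqrt a)) atTop (nhds (-x^2/2)) := by
      have h2 : Tendsto (fun a : ℝ => x^3 / (3 * Real.sqrt a)) atTop (nhds 0) :=
        tendsto_const_nhds.div_atTop (hsq.const_mul_atTop (by norm_num))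
      simpa using tendsto_const_nhds.add h2
    apply tendsto_of_tendsto_of_tendsto_of_le_of_le' tendsto_const_nhds hup
    · filter_upwards [eventually_ge_atTop (1:ℝ)] with a ha
      have ha0 : (0:ℝ) < a := by linarith
      have hr : (0:ℝ) < Real.sqrt a := Real.sqrt_pos.mpr ha0
      have hrr : Real.sqrt a * Real.sqrt a = a := Real.mul_self_sqrt ha0.le
      have hu : (0:ℝ) < x / Real.sqrt a := div_pos hx hr
      have := log_ge_quad (x / Real.sqrt a) hu.le
      have hsq2 : a * (x / Real.sqrt a)^2 = x^2 := by
        field_simp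
        rw [Real.sq_sqrt ha0.le]
      have hmul := mul_le_mul_of_nonneg_left
        (by linarith : -(x / Real.sqrt a)^2/2 ≤ Real.log (1 + x / Real.sqrt a) - x / Real.sqrt a)
        ha0.le
      nlinarith [hmul, hsq2]
    · filter_upwards [eventually_ge_atTop (1:ℝ)] with a ha
      have ha0 : (0:ℝ) < a := by linarith
      have hr : (0:ℝ) < Real.sqrt a := Real.sqrt_pos.mpr ha0
      have hrr : Real.sqrt a * Real.sqrt a = a := Real.mul_self_sqrt ha0.le
      have hu : (0:ℝ) < x / Real.sqrt a := div_pos hx hr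
      have := log_le_cubic (x / Real.sqrt a) hu.le
      have hsq2 : a * (x / Real.sqrt a)^2 = x^2 := by
        field_simp
        rw [Real.sq_sqrt ha0.le]
      have hsq3 : a * (x / Real.sqrt a)^3 = x^3 / Real.sqrt a := by
        field_simp
        linear_combination (-1 : ℝ) * hrr
      have hmul := mul_le_mul_of_nonneg_left
        (by linarith : Real.log (1 + x / Real.sqrt a) - x / Real.sqrt a
          ≤ -(x / Real.sqrt a)^2/2 + (x / Real.sqrt a)^3/3) ha0.le
      have h33 : x^3/(3*Real.sqrt a) = (x^3/Real.sqrt a)/3 := by ring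
      nlinarith [hmul, hsq2, hsq3, h33]
  -- T2
  have hT2 : Tendsto (fun a : ℝ => Real.sqrt a * Real.log (1 + x / Real.sqrt a))
      atTop (nhds x) := by
    have hlo : Tendsto (fun a : ℝ => x - x^2 / (2 * Real.sqrt a)) atTop (nhds x) := by
      have h2 : Tendsto (fun a : ℝ => x^2 / (2 * Real.sqrt a)) atTop (nhds 0) :=
        tendsto_const_nhds.div_atTop (hsq.const_mul_atTop (by norm_num))
      simpa using tendsto_const_nhds.sub h2
    apply tendsto_of_tendsto_of_tendsto_of_le_of_le' hlo tendsto_const_nhds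
    · filter_upwards [eventually_ge_atTop (1:ℝ)] with a ha
      have ha0 : (0:ℝ) < a := by linarith
      have hr : (0:ℝ) < Real.sqrt a := Real.sqrt_pos.mpr ha0
      have hrr : Real.sqrt a * Real.sqrt a = a := Real.mul_self_sqrt ha0.le
      have hu : (0:ℝ) < x / Real.sqrt a := div_pos hx hr
      have := log_ge_quad (x / Real.sqrt a) hu.le
      have h1 : Real.sqrt a * (x / Real.sqrt a) = x := by field_simp
      have h2 : Real.sqrt a * (x / Real.sqrt a)^2 = x^2 / Real.sqrt a := by
        field_simp
      have hmul := mul_le_mul_of_nonneg_left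
        (by linarith : x / Real.sqrt a - (x / Real.sqrt a)^2/2
          ≤ Real.log (1 + x / Real.sqrt a)) hr.le
      have h22 : x^2/(2*Real.sqrt a) = (x^2/Real.sqrt a)/2 := by ring
      nlinarith [hmul, h1, h2, h22]
    · filter_upwards [eventually_ge_atTop (1:ℝ)] with a ha
      have ha0 : (0:ℝ) < a := by linarith
      have hr : (0:ℝ) < Real.sqrt a := Real.sqrt_pos.mpr ha0
      have hu : (0:ℝ) < x / Real.sqrt a := div_pos hx hr
      have := log_le_lin (x / Real.sqrt a) hu.le
      have h1 : Real.sqrt a * (x / Real.sqrt a) = x := by field_simp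
      have hmul := mul_le_mul_of_nonneg_left this hr.le
      nlinarith [hmul, h1]
  have hE : Tendsto (fun a : ℝ =>
      (a + β * Real.sqrt a) * Real.log (1 + x / Real.sqrt a) - Real.sqrt a * x)
      atTop (nhds (β*x - x^2/2)) := by
    have hsum : Tendsto (fun a : ℝ =>
        a * (Real.log (1 + x / Real.sqrt a) - x / Real.sqrt a)
          + β * (Real.sqrt a * Real.log (1 + x / Real.sqrt a)))
        atTop (nhds (-x^2/2 + β * x)) := hT1.add (hT2.const_mul β)
    rw [show β*x - x^2/2 = -x^2/2 + β*x by ring]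
    apply hsum.congr'
    filter_upwards [eventually_ge_atTop (1:ℝ)] with a ha
    have ha0 : (0:ℝ) < a := by linarith
    have hr : (0:ℝ) < Real.sqrt a := Real.sqrt_pos.mpr ha0
    have hrr : Real.sqrt a * Real.sqrt a = a := Real.mul_self_sqrt ha0.le
    have h1 : a * (x / Real.sqrt a) = Real.sqrt a * x := by
      field_simp
      linear_combination (-1 : ℝ) * hrr
    ring_nf
    ring_nf at h1
    rw [← h1]
    ring
  have := ((Real.continuous_exp.tendsto _).comp hE).mul hfrac
  exact this

lemma G_bound (β : ℝ) (hβ : 0 < β) :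
    ∀ᶠ (a:ℝ) in atTop, ∀ x ∈ Ioi (0:ℝ),
      ‖Gfun β a x‖ ≤ x * Real.exp (β*x - x^2/6) + x * Real.exp (-x) := by
  have hl2a : (0:ℝ) < Real.log 2 := Real.log_pos one_lt_two
  have hl2b : Real.log 2 < 1 := by
    have := Real.log_two_lt_d9; linarith
  set c0 := (β * Real.log 2 + 1)/(1 - Real.log 2) with hc0
  have hc0pos : 0 < c0 := div_pos (by nlinarith) (by linarith)
  have hc0e : c0 * (1 - Real.log 2) = β * Real.log 2 + 1 := by
    rw [hc0, div_mul_cancel₀ _ (by linarith : (1:ℝ) - Real.log 2 ≠ 0)]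
  filter_upwards [eventually_ge_atTop (max 1 (c0^2))] with a ha
  intro x hx
  have ha1 : (1:ℝ) ≤ a := le_trans (le_max_left _ _) ha
  have hac : c0^2 ≤ a := le_trans (le_max_right _ _) ha
  have ha0 : (0:ℝ) < a := lt_of_lt_of_le one_pos ha1
  have hr : (0:ℝ) < Real.sqrt a := Real.sqrt_pos.mpr ha0
  have hrr : Real.sqrt a * Real.sqrt a = a := Real.mul_self_sqrt ha0.le
  have hr1 : (1:ℝ) ≤ Real.sqrt a := by
    rw [show (1:ℝ) = Real.sqrt 1 by simp]; exact Real.sqrt_le_sqrt ha1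
  have hrc0 : c0 ≤ Real.sqrt a := by
    rw [show c0 = Real.sqrt (c0^2) by rw [Real.sqrt_sq hc0pos.le]]
    exact Real.sqrt_le_sqrt hac
  simp only [Set.mem_Ioi] at hx
  set u := x / Real.sqrt a with hu
  have hu0 : (0:ℝ) < u := div_pos hx hr
  have h1u : (0:ℝ) < 1 + u := by linarith
  have hxu : Real.sqrt a * u = x := by rw [hu]; field_simp
  have hax : Real.sqrt a * x = a * u := by rw [← hxu, ← mul_assoc, hrr]
  have hx2 : x^2 = a * u^2 := by rw [← hxu, mul_pow, Real.sq_sqrt ha0.le]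
  have hlogpos : (0:ℝ) ≤ Real.log (1 + u) := Real.log_nonneg (by linarith)
  have hs : (0:ℝ) ≤ a + β * Real.sqrt a := by positivity
  have hGv : ‖Gfun β a x‖
      = Real.exp ((a + β * Real.sqrt a) * Real.log (1 + u) - Real.sqrt a * x) * (x / (1 + u)) := by
    unfold Gfun
    rw [Real.norm_eq_abs, abs_of_nonneg]
    positivity
  have hfr : x / (1 + u) ≤ x := div_le_self hx.le (by linarith)
  have key : Real.exp ((a + β * Real.sqrt a) * Real.log (1 + u) - Real.sqrt a * x)
      ≤ Real.exp (β*x - x^2/6) + Real.exp (-x) := by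
    rcases le_or_gt u 1 with hu1 | hu1
    · have hlog := log_le_cubic u hu0.le
      have hmul := mul_le_mul_of_nonneg_left hlog hs
      have hPu : u - u^2/2 + u^3/3 - u ≤ -u^2/6 := by nlinarith
      have hPu0 : u - u^2/2 + u^3/3 - u ≤ 0 := by nlinarith
      have hmul2 := mul_le_mul_of_nonneg_left hPu ha0.le
      have hmul3 : β * Real.sqrt a * (u - u^2/2 + u^3/3 - u) ≤ 0 :=
        mul_nonpos_of_nonneg_of_nonpos (by positivity) hPu0
      have hEle : (a + β * Real.sqrt a) * Real.log (1 + u) - Real.sqrt a * x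
          ≤ β*x - x^2/6 := by
        rw [hax, hx2, ← hxu]
        linarith [hmul, hmul2, hmul3]
      have := Real.exp_le_exp.mpr hEle
      linarith [Real.exp_pos (-x)]
    · have hlog := log_le_mul_log2 u hu1.le
      have hmul := mul_le_mul_of_nonneg_left hlog hs
      have h5 : β * Real.log 2 + 1 ≤ Real.sqrt a * (1 - Real.log 2) := by nlinarith
      have hur : (0:ℝ) ≤ u * Real.sqrt a := by positivity
      have h5u := mul_le_mul_of_nonneg_left h5 hur
      have h7 : u * Real.sqrt a * (Real.sqrt a * (1 - Real.log 2)) = u * (a * (1 - Real.log 2)) := by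
        linear_combination u * (1 - Real.log 2) * hrr
      have h8 : u * Real.sqrt a * (β * Real.log 2 + 1) ≤ u * (a * (1 - Real.log 2)) :=
        h5u.trans_eq h7
      have hEle : (a + β * Real.sqrt a) * Real.log (1 + u) - Real.sqrt a * x ≤ -x := by
        rw [hax, ← hxu]
        linarith [hmul, h8]
      have := Real.exp_le_exp.mpr hEle
      have h6 : (0:ℝ) < Real.exp (β*x - x^2/6) := Real.exp_pos _
      linarith
  rw [hGv]
  calc Real.exp ((a + β * Real.sqrt a) * Real.log (1 + u) - Real.sqrt a * x) * (x / (1 + u))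
      ≤ (Real.exp (β*x - x^2/6) + Real.exp (-x)) * x := by
        apply mul_le_mul key hfr (by positivity)
        positivity
    _ = x * Real.exp (β*x - x^2/6) + x * Real.exp (-x) := by ring

lemma D_integrable (β : ℝ) :
    IntegrableOn (fun x : ℝ => x * Real.exp (β*x - x^2/6) + x * Real.exp (-x)) (Ioi 0) := by
  apply Integrable.add
  · have h := intg_x_exp (1/6) β (by norm_num)
    apply h.congr
    filter_upwards with x
    ring_nf
  · apply Integrable.mono' (((exp_neg_integrableOn_Ioi 0 (by norm_num : (0:ℝ) < 1/2))).const_mul 2)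
    · exact (continuous_id.mul (Real.continuous_exp.comp continuous_neg)).aestronglyMeasurable
    · filter_upwards [ae_restrict_mem measurableSet_Ioi] with x hx
      simp only [Set.mem_Ioi] at hx
      rw [Real.norm_eq_abs, abs_of_nonneg (by positivity)]
      have h1 : x/2 + 1 ≤ Real.exp (x/2) := Real.add_one_le_exp (x/2)
      have h2 : x ≤ 2 * Real.exp (x/2) := by linarith
      calc x * Real.exp (-x) ≤ 2 * Real.exp (x/2) * Real.exp (-x) := by
            apply mul_le_mul_of_nonneg_right h2 (Real.exp_nonneg _)
        _ = 2 * Real.exp (-(1/2) * x) := by rw [mul_assoc, ← Real.exp_add]; ring_nf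

lemma G_meas (β : ℝ) :
    ∀ᶠ (a:ℝ) in atTop, AEStronglyMeasurable (Gfun β a) (volume.restrict (Ioi 0)) := by
  filter_upwards [eventually_ge_atTop (1:ℝ)] with a ha
  have ha0 : (0:ℝ) < a := by linarith
  have hr : (0:ℝ) < Real.sqrt a := Real.sqrt_pos.mpr ha0
  have h1 : ContinuousOn (fun x : ℝ => 1 + x / Real.sqrt a) (Ioi 0) := by fun_prop
  have hne : ∀ x ∈ Ioi (0:ℝ), 1 + x / Real.sqrt a ≠ 0 := by
    intro x hx
    simp only [Set.mem_Ioi] at hx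
    have : 0 < x / Real.sqrt a := div_pos hx hr
    positivity
  have hlog : ContinuousOn (fun x : ℝ => Real.log (1 + x / Real.sqrt a)) (Ioi 0) := h1.log hne
  have hcont : ContinuousOn (Gfun β a) (Ioi 0) := by
    unfold Gfun
    apply ContinuousOn.mul
    · apply ContinuousOn.rexp
      exact (continuousOn_const.mul hlog).sub (by fun_prop)
    · exact ContinuousOn.div (by fun_prop) h1 hne
  exact hcont.aestronglyMeasurable measurableSet_Ioi

open MeasureTheory Filter in
theorem halfin_whitt_limit (β : ℝ) (hβ : 0 < β) :
    Tendsto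
      (fun a : ℝ => (∫ t in Set.Ioi (0 : ℝ),
        (1 + t) ^ (a + β * Real.sqrt a) * (a * t / (1 + t)) * Real.exp (-a * t))⁻¹)
      atTop
      (nhds ((1 + β *
        (∫ t in Set.Iic β, Real.exp (-t ^ 2 / 2) / Real.sqrt (2 * Real.pi)) /
          (Real.exp (-β ^ 2 / 2) / Real.sqrt (2 * Real.pi)))⁻¹)) := by
  have hΦ : (0:ℝ) ≤ ∫ t in Set.Iic β, Real.exp (-t ^ 2 / 2) / Real.sqrt (2 * Real.pi) :=
    setIntegral_nonneg measurableSet_Iic (fun t _ => by positivity)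
  have hφ : (0:ℝ) < Real.exp (-β ^ 2 / 2) / Real.sqrt (2 * Real.pi) := by positivity
  have hpos : (0:ℝ) < 1 + β *
      (∫ t in Set.Iic β, Real.exp (-t ^ 2 / 2) / Real.sqrt (2 * Real.pi)) /
        (Real.exp (-β ^ 2 / 2) / Real.sqrt (2 * Real.pi)) := by
    have : (0:ℝ) ≤ β *
        (∫ t in Set.Iic β, Real.exp (-t ^ 2 / 2) / Real.sqrt (2 * Real.pi)) /
          (Real.exp (-β ^ 2 / 2) / Real.sqrt (2 * Real.pi)) := by
      apply div_nonneg (mul_nonneg hβ.le hΦ) hφ.le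
    linarith
  have hlim : ∀ᵐ x ∂(volume.restrict (Set.Ioi (0:ℝ))),
      Tendsto (fun a : ℝ => Gfun β a x) atTop
        (nhds (x * Real.exp (β*x - x^2/2))) := by
    filter_upwards [ae_restrict_mem measurableSet_Ioi] with x hx
    rw [mul_comm]
    exact G_tendsto β x hx
  have hbound : ∀ᶠ (a:ℝ) in atTop, ∀ᵐ x ∂(volume.restrict (Set.Ioi (0:ℝ))),
      ‖Gfun β a x‖ ≤ x * Real.exp (β*x - x^2/6) + x * Real.exp (-x) := by
    filter_upwards [G_bound β hβ] with a ha
    filter_upwards [ae_restrict_mem measurableSet_Ioi] with x hx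
    exact ha x hx
  have hDCT := tendsto_integral_filter_of_dominated_convergence
    (μ := volume.restrict (Set.Ioi (0:ℝ)))
    (F := fun a : ℝ => Gfun β a)
    (f := fun x => x * Real.exp (β*x - x^2/2))
    (fun x => x * Real.exp (β*x - x^2/6) + x * Real.exp (-x))
    (G_meas β) hbound (D_integrable β) hlim
  rw [show (∫ x in Set.Ioi (0:ℝ), x * Real.exp (β*x - x^2/2))
      = 1 + β * (∫ t in Set.Iic β, Real.exp (-t ^ 2 / 2) / Real.sqrt (2 * Real.pi)) /
        (Real.exp (-β ^ 2 / 2) / Real.sqrt (2 * Real.pi)) from value_eq β hβ] at hDCT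
  have hmain : Tendsto
      (fun a : ℝ => ∫ t in Set.Ioi (0 : ℝ),
        (1 + t) ^ (a + β * Real.sqrt a) * (a * t / (1 + t)) * Real.exp (-a * t))
      atTop
      (nhds (1 + β *
        (∫ t in Set.Iic β, Real.exp (-t ^ 2 / 2) / Real.sqrt (2 * Real.pi)) /
          (Real.exp (-β ^ 2 / 2) / Real.sqrt (2 * Real.pi)))) := by
    apply hDCT.congr'
    filter_upwards [eventually_ge_atTop (1:ℝ)] with a ha
    exact (integral_eq_G β a ha).symm
  exact hmain.inv₀ hpos.ne'
end

section
/- For every β > 0 and every a > 0, C(a+β√a, a) > (1 + β·Φ(β)/φ(β))^{−1}, i.e., the Halfin–Whitt limit C_*(β) is a strict lower bound for the Erlang C formula along the square-root staffing curve. -/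
set_option maxHeartbeats 1000000

open MeasureTheory Set Filter Real

lemma exp_gt_quad {x : ℝ} (hx : 0 < x) : 1 + x + x^2/2 < Real.exp x := by
  have hmono : StrictMonoOn (fun z => Real.exp z - (1 + z + z^2/2)) (Set.Ici (0:ℝ)) := by
    apply strictMonoOn_of_deriv_pos (convex_Ici 0)
    · fun_prop
    · intro z hz
      rw [interior_Ici] at hz
      have hd : HasDerivAt (fun z : ℝ => Real.exp z - (1 + z + z^2/2))
          (Real.exp z - (0 + 1 + (2:ℕ) * z^(2-1)/2)) z :=
        (Real.hasDerivAt_exp z).sub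
          (((hasDerivAt_const z (1:ℝ)).add (hasDerivAt_id z)).add
            ((hasDerivAt_pow 2 z).div_const 2))
      rw [hd.deriv]
      have := Real.add_one_lt_exp (ne_of_gt hz)
      norm_num
      linarith
  have h0 := hmono (le_refl (0:ℝ)) (le_of_lt hx) hx
  simp at h0
  linarith

lemma rpow_exp_bound (c : ℝ) {a : ℝ} (ha : 0 < a) :
    ∃ M : ℝ, ∀ t : ℝ, 0 ≤ t →
      (1+t) ^ c * Real.exp (-(a*t)) ≤ M * Real.exp (-(a/2)*t) := by
  set C : ℝ := |c| with hC
  have hC0 : 0 ≤ C := abs_nonneg c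
  set ε : ℝ := a / (2*(C+1)) with hε
  have hεpos : 0 < ε := by positivity
  refine ⟨Real.exp (C * (ε - 1 - Real.log ε)), fun t ht => ?_⟩
  have h1t : (0:ℝ) < 1 + t := by linarith
  have hlog0 : 0 ≤ Real.log (1+t) := Real.log_nonneg (by linarith)
  have hlog : Real.log (1+t) ≤ ε*(1+t) - 1 - Real.log ε := by
    have h := Real.log_le_sub_one_of_pos (mul_pos hεpos h1t)
    rw [Real.log_mul (ne_of_gt hεpos) (ne_of_gt h1t)] at h
    linarith
  have hcle : c * Real.log (1+t) ≤ C * Real.log (1+t) :=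
    mul_le_mul_of_nonneg_right (le_abs_self c) hlog0
  have hεc : C * ε ≤ a/2 := by
    have h1 : C*ε = a*C/(2*(C+1)) := by rw [hε]; ring
    rw [h1, div_le_div_iff₀ (by positivity) two_pos]
    nlinarith
  have key : c * Real.log (1+t) - a*t ≤ C * (ε - 1 - Real.log ε) + (-(a/2)*t) := by
    have h2 : C * Real.log (1+t) ≤ C * (ε*(1+t) - 1 - Real.log ε) :=
      mul_le_mul_of_nonneg_left hlog hC0
    have h4 : (C*ε)*t ≤ (a/2)*t := mul_le_mul_of_nonneg_right hεc ht
    nlinarith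
  calc (1+t) ^ c * Real.exp (-(a*t))
      = Real.exp (c * Real.log (1+t) - a*t) := by
        rw [Real.rpow_def_of_pos h1t, ← Real.exp_add]
        congr 1; ring
    _ ≤ Real.exp (C * (ε - 1 - Real.log ε) + (-(a/2)*t)) := Real.exp_le_exp.mpr key
    _ = Real.exp (C * (ε - 1 - Real.log ε)) * Real.exp (-(a/2)*t) := Real.exp_add _ _

lemma rpow_exp_integrable (c : ℝ) {a : ℝ} (ha : 0 < a) :
    IntegrableOn (fun t => (1+t) ^ c * Real.exp (-(a*t))) (Set.Ioi (0:ℝ)) := by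
  obtain ⟨M, hM⟩ := rpow_exp_bound c ha
  have hg : IntegrableOn (fun t => M * Real.exp (-(a/2)*t)) (Set.Ioi (0:ℝ)) :=
    (exp_neg_integrableOn_Ioi 0 (by positivity)).const_mul M
  refine Integrable.mono' hg ?_ ?_
  · apply ContinuousOn.aestronglyMeasurable ?_ measurableSet_Ioi
    refine ContinuousOn.mul ?_ (Continuous.continuousOn (by fun_prop))
    exact ContinuousOn.rpow_const (by fun_prop) fun t ht => Or.inl (by
      have h : (0:ℝ) < t := ht; positivity)
  · filter_upwards [ae_restrict_mem measurableSet_Ioi] with t ht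
    have h1t : (0:ℝ) < 1 + t := by have h : (0:ℝ) < t := ht; linarith
    rw [Real.norm_eq_abs,
      abs_of_nonneg (mul_nonneg (Real.rpow_nonneg h1t.le c) (Real.exp_nonneg _))]
    exact hM t (le_of_lt ht)

lemma rpow_exp_tendsto (c : ℝ) {a : ℝ} (ha : 0 < a) :
    Tendsto (fun t => (1+t) ^ c * Real.exp (-(a*t))) atTop (nhds 0) := by
  obtain ⟨M, hM⟩ := rpow_exp_bound c ha
  have h1 : Tendsto (fun t : ℝ => -(a/2)*t) atTop atBot := by
    apply Tendsto.const_mul_atTop_of_neg (by linarith : -(a/2) < 0) tendsto_id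
  have hexp : Tendsto (fun t : ℝ => Real.exp (-(a/2)*t)) atTop (nhds 0) :=
    Real.tendsto_exp_atBot.comp h1
  have hup : Tendsto (fun t : ℝ => M * Real.exp (-(a/2)*t)) atTop (nhds 0) := by
    simpa using hexp.const_mul M
  apply tendsto_of_tendsto_of_tendsto_of_le_of_le' tendsto_const_nhds hup
  · filter_upwards [eventually_ge_atTop (0:ℝ)] with t ht
    have h1t : (0:ℝ) < 1 + t := by linarith
    exact mul_nonneg (Real.rpow_nonneg h1t.le c) (Real.exp_nonneg _)
  · filter_upwards [eventually_ge_atTop (0:ℝ)] with t ht using hM t ht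

lemma erlang_ibp {a : ℝ} (s : ℝ) (ha : 0 < a) :
    a * ∫ t in Set.Ioi (0:ℝ), (1+t) ^ s * Real.exp (-(a*t)) =
      1 + s * ∫ t in Set.Ioi (0:ℝ), (1+t) ^ (s-1) * Real.exp (-(a*t)) := by
  have key : ∫ t in Set.Ioi (0:ℝ),
      (a * ((1+t) ^ s * Real.exp (-(a*t))) - s * ((1+t) ^ (s-1) * Real.exp (-(a*t)))) = 1 := by
    have hder : ∀ x ∈ Set.Ioi (0:ℝ),
        HasDerivAt (fun t : ℝ => -((1+t) ^ s * Real.exp (-(a*t))))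
          (a * ((1+x) ^ s * Real.exp (-(a*x))) - s * ((1+x) ^ (s-1) * Real.exp (-(a*x)))) x := by
      intro x hx
      have hx0 : (0:ℝ) < x := hx
      have hx1 : (0:ℝ) < 1 + x := by linarith
      have hbase : HasDerivAt (fun t : ℝ => 1 + t) 1 x := (hasDerivAt_id x).const_add 1
      have hrpow : HasDerivAt (fun t : ℝ => (1+t) ^ s) (1 * s * (1+x) ^ (s-1)) x :=
        hbase.rpow_const (Or.inl hx1.ne')
      have hlin : HasDerivAt (fun t : ℝ => -(a*t)) (-a) x := by
        have h := ((hasDerivAt_id x).const_mul a).neg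
        simp only [mul_one] at h
        exact h
      have hexp : HasDerivAt (fun t : ℝ => Real.exp (-(a*t))) (Real.exp (-(a*x)) * -a) x :=
        hlin.exp
      have h := (hrpow.mul hexp).neg
      refine h.congr_deriv ?_
      ring
    have hcont : ContinuousWithinAt (fun t : ℝ => -((1+t) ^ s * Real.exp (-(a*t))))
        (Set.Ici (0:ℝ)) 0 := by
      apply ContinuousAt.continuousWithinAt
      have h1 : ContinuousAt (fun t : ℝ => (1+t) ^ s) 0 := by
        apply ContinuousAt.rpow_const (by fun_prop)
        norm_num
      exact (h1.mul (by fun_prop)).neg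
    have hint : IntegrableOn (fun t : ℝ =>
        a * ((1+t) ^ s * Real.exp (-(a*t))) - s * ((1+t) ^ (s-1) * Real.exp (-(a*t))))
        (Set.Ioi (0:ℝ)) :=
      ((rpow_exp_integrable s ha).const_mul a).sub ((rpow_exp_integrable (s-1) ha).const_mul s)
    have htend : Tendsto (fun t : ℝ => -((1+t) ^ s * Real.exp (-(a*t)))) atTop (nhds 0) := by
      simpa using (rpow_exp_tendsto s ha).neg
    have := integral_Ioi_of_hasDerivAt_of_tendsto hcont hder hint htend
    rw [this]
    norm_num
  rw [integral_sub ((rpow_exp_integrable s ha).const_mul a)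
      ((rpow_exp_integrable (s-1) ha).const_mul s),
    integral_const_mul, integral_const_mul] at key
  linarith

lemma erlang_cov {r : ℝ} (hr : 0 < r) (g : ℝ → ℝ) :
    ∫ t in Set.Ioi (0:ℝ), g t =
      ∫ v in Set.Ioi (0:ℝ), (Real.exp (v/r) * (1/r)) * g (Real.exp (v/r) - 1) := by
  have himg : (fun v : ℝ => Real.exp (v/r) - 1) '' Set.Ioi 0 = Set.Ioi (0:ℝ) := by
    ext y
    constructor
    · rintro ⟨v, hv, rfl⟩
      have hv0 : (0:ℝ) < v := hv
      have := Real.add_one_lt_exp (ne_of_gt (div_pos hv0 hr))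
      have h2 : (0:ℝ) < v/r := div_pos hv0 hr
      exact Set.mem_Ioi.mpr (by linarith)
    · intro hy
      have hy0 : (0:ℝ) < y := hy
      refine ⟨r * Real.log (1+y), Set.mem_Ioi.mpr
        (mul_pos hr (Real.log_pos (by linarith))), ?_⟩
      show Real.exp (r * Real.log (1+y) / r) - 1 = y
      rw [mul_comm r, mul_div_assoc, div_self hr.ne', mul_one,
        Real.exp_log (by linarith)]
      ring
  have hderiv : ∀ x ∈ Set.Ioi (0:ℝ),
      HasDerivWithinAt (fun v : ℝ => Real.exp (v/r) - 1)
        (Real.exp (x/r) * (1/r)) (Set.Ioi 0) x := by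
    intro x _
    exact (((hasDerivAt_id x).div_const r).exp.sub_const 1).hasDerivWithinAt
  have hinj : Set.InjOn (fun v : ℝ => Real.exp (v/r) - 1) (Set.Ioi 0) := by
    intro x _ y _ h
    simp only [sub_left_inj] at h
    have := Real.exp_eq_exp.mp h
    field_simp at this
    exact this
  calc ∫ t in Set.Ioi (0:ℝ), g t
      = ∫ t in (fun v : ℝ => Real.exp (v/r) - 1) '' Set.Ioi 0, g t := by rw [himg]
    _ = ∫ v in Set.Ioi (0:ℝ), |Real.exp (v/r) * (1/r)| • g (Real.exp (v/r) - 1) :=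
        integral_image_eq_integral_abs_deriv_smul measurableSet_Ioi hderiv hinj g
    _ = _ := by
        apply integral_congr_ae
        filter_upwards with v
        rw [smul_eq_mul, abs_of_pos (by positivity)]

lemma gaussian_shift (β : ℝ) :
    ∫ v in Set.Ioi (0:ℝ), Real.exp (-(v-β)^2/2) = ∫ t in Set.Iic β, Real.exp (-t^2/2) := by
  have himg : (fun w : ℝ => w + β) '' Set.Ioi (-β) = Set.Ioi (0:ℝ) := by
    rw [Set.image_add_const_Ioi]; norm_num
  have hderiv : ∀ x ∈ Set.Ioi (-β),
      HasDerivWithinAt (fun w : ℝ => w + β) (1:ℝ) (Set.Ioi (-β)) x := fun x _ =>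
    ((hasDerivAt_id x).add_const β).hasDerivWithinAt
  have hinj : Set.InjOn (fun w : ℝ => w + β) (Set.Ioi (-β)) := fun x _ y _ h => by
    simpa using h
  have step1 : ∫ v in Set.Ioi (0:ℝ), Real.exp (-(v-β)^2/2)
      = ∫ w in Set.Ioi (-β), Real.exp (-w^2/2) := by
    rw [← himg, integral_image_eq_integral_abs_deriv_smul measurableSet_Ioi hderiv hinj]
    apply integral_congr_ae
    filter_upwards with w
    norm_num
  rw [step1]
  have := integral_comp_neg_Ioi (-β) (fun x => Real.exp (-x^2/2))
  simp only [neg_neg] at this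
  rw [← this]
  apply integral_congr_ae
  filter_upwards with w
  norm_num

lemma gaussQ (β : ℝ) :
    ∫ v in Set.Ioi (0:ℝ), Real.exp (β*v - v^2/2)
      = Real.exp (β^2/2) * ∫ t in Set.Iic β, Real.exp (-t^2/2) := by
  have h1 : ∀ v : ℝ, Real.exp (β*v - v^2/2)
      = Real.exp (β^2/2) * Real.exp (-(v-β)^2/2) := by
    intro v
    rw [← Real.exp_add]
    congr 1
    ring
  rw [show (∫ v in Set.Ioi (0:ℝ), Real.exp (β*v - v^2/2))
      = ∫ v in Set.Ioi (0:ℝ), Real.exp (β^2/2) * Real.exp (-(v-β)^2/2) from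
      integral_congr_ae (by filter_upwards with v using h1 v),
    integral_const_mul, gaussian_shift]

lemma G_integrable (β : ℝ) :
    IntegrableOn (fun v => Real.exp (β*v - v^2/2)) (Set.Ioi (0:ℝ)) := by
  have h0 : Integrable (fun v : ℝ => Real.exp (β^2) * Real.exp (-(1/4 : ℝ)*v^2)) :=
    (integrable_exp_neg_mul_sq (by norm_num : (0:ℝ) < 1/4)).const_mul _
  refine Integrable.mono' h0.integrableOn ?_ ?_
  · exact (Continuous.aestronglyMeasurable (by fun_prop))
  · filter_upwards with v
    rw [Real.norm_eq_abs, abs_of_nonneg (Real.exp_nonneg _), ← Real.exp_add]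
    apply Real.exp_le_exp.mpr
    nlinarith [sq_nonneg (v/2 - β)]

lemma erlang_value {a β r : ℝ} (ha : 0 < a) (hr : 0 < r) :
    ∫ t in Set.Ioi (0:ℝ), (1+t) ^ (a + β*r) * (a * t / (1 + t)) * Real.exp (-a * t)
      = 1 + (β*r) * ∫ t in Set.Ioi (0:ℝ), (1+t) ^ (a + β*r - 1) * Real.exp (-(a*t)) := by
  set s : ℝ := a + β*r with hs
  have hsplit : (∫ t in Set.Ioi (0:ℝ),
      (1 + t) ^ s * (a * t / (1 + t)) * Real.exp (-a * t))
      = ∫ t in Set.Ioi (0:ℝ),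
          (a * ((1+t) ^ s * Real.exp (-(a*t))) - a * ((1+t) ^ (s-1) * Real.exp (-(a*t)))) := by
    apply setIntegral_congr_fun measurableSet_Ioi
    intro t ht
    have ht0 : (0:ℝ) < t := ht
    have h1t : (0:ℝ) < 1 + t := by linarith
    have hpow : (1+t) ^ s = (1+t) ^ (s-1) * (1+t) := by
      rw [← Real.rpow_add_one h1t.ne' (s-1)]
      norm_num
    show (1 + t) ^ s * (a * t / (1 + t)) * Real.exp (-a * t)
        = a * ((1+t) ^ s * Real.exp (-(a*t))) - a * ((1+t) ^ (s-1) * Real.exp (-(a*t)))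
    rw [hpow, neg_mul]
    field_simp
    ring
  rw [hsplit, integral_sub ((rpow_exp_integrable s ha).const_mul a)
      ((rpow_exp_integrable (s-1) ha).const_mul a),
    integral_const_mul, integral_const_mul, erlang_ibp s ha]
  ring

lemma key_lt {a β r : ℝ} (hβ : 0 < β) (ha : 0 < a) (hr : 0 < r) (hr2 : r^2 = a) :
    r * (∫ t in Set.Ioi (0:ℝ), (1+t) ^ (a + β*r - 1) * Real.exp (-(a*t)))
      < Real.exp (β^2/2) * ∫ t in Set.Iic β, Real.exp (-t^2/2) := by
  set s : ℝ := a + β*r with hs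
  have hcov := erlang_cov hr (fun t => (1+t) ^ (s-1) * Real.exp (-(a*t)))
  have hrK : r * (∫ t in Set.Ioi (0:ℝ), (1+t) ^ (s-1) * Real.exp (-(a*t)))
      = ∫ v in Set.Ioi (0:ℝ), Real.exp (s*(v/r) - a*(Real.exp (v/r) - 1)) := by
    have hWeq : ∀ v : ℝ, (Real.exp (v/r) * (1/r)) *
        ((1 + (Real.exp (v/r) - 1)) ^ (s-1) * Real.exp (-(a*(Real.exp (v/r) - 1))))
        = (1/r) * Real.exp (s*(v/r) - a*(Real.exp (v/r) - 1)) := by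
      intro v
      have h1 : (1:ℝ) + (Real.exp (v/r) - 1) = Real.exp (v/r) := by ring
      rw [h1, Real.rpow_def_of_pos (Real.exp_pos _), Real.log_exp]
      rw [mul_comm (Real.exp (v/r)) (1/r), mul_assoc, ← Real.exp_add, ← Real.exp_add]
      have harg : v/r + (v/r*(s-1) + -(a*(Real.exp (v/r) - 1)))
          = s*(v/r) - a*(Real.exp (v/r) - 1) := by ring
      rw [harg]
    rw [hcov]
    simp only [hWeq]
    rw [integral_const_mul]
    field_simp
  have hWlt : ∀ v ∈ Set.Ioi (0:ℝ),
      Real.exp (s*(v/r) - a*(Real.exp (v/r) - 1)) < Real.exp (β*v - v^2/2) := by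
    intro v hv
    have hv0 : (0:ℝ) < v := hv
    apply Real.exp_lt_exp.mpr
    have hx : 0 < v/r := div_pos hv0 hr
    have hrx : r * (v/r) = v := by field_simp
    have hq := exp_gt_quad hx
    have hv2 : v^2 = a * (v/r)^2 := by
      rw [← hrx, mul_pow, hr2]
      field_simp
    have hsx : s * (v/r) = a*(v/r) + β*v := by
      rw [hs]; field_simp
    have hmul : a * ((v/r) + (v/r)^2/2) < a * (Real.exp (v/r) - 1) :=
      mul_lt_mul_of_pos_left (by linarith) ha
    rw [hsx]
    have hv2' : v^2/2 = a * (v/r)^2 / 2 := by rw [hv2]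
    linarith [hv2']
  have hGint := G_integrable β
  have hWint : IntegrableOn (fun v => Real.exp (s*(v/r) - a*(Real.exp (v/r) - 1)))
      (Set.Ioi (0:ℝ)) := by
    refine Integrable.mono' hGint ?_ ?_
    · exact (Continuous.aestronglyMeasurable (by fun_prop))
    · filter_upwards [ae_restrict_mem measurableSet_Ioi] with v hv
      rw [Real.norm_eq_abs, abs_of_nonneg (Real.exp_nonneg _)]
      exact le_of_lt (hWlt v hv)
  have hlt : (∫ v in Set.Ioi (0:ℝ), Real.exp (s*(v/r) - a*(Real.exp (v/r) - 1)))
      < ∫ v in Set.Ioi (0:ℝ), Real.exp (β*v - v^2/2) := by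
    have hint2 : IntegrableOn (fun v =>
        Real.exp (β*v - v^2/2) - Real.exp (s*(v/r) - a*(Real.exp (v/r) - 1)))
        (Set.Ioi (0:ℝ)) := hGint.sub hWint
    have hnn : 0 ≤ᵐ[volume.restrict (Set.Ioi (0:ℝ))] (fun v =>
        Real.exp (β*v - v^2/2) - Real.exp (s*(v/r) - a*(Real.exp (v/r) - 1))) := by
      filter_upwards [ae_restrict_mem measurableSet_Ioi] with v hv
      exact sub_nonneg.mpr (le_of_lt (hWlt v hv))
    have hpos : 0 < ∫ v in Set.Ioi (0:ℝ),
        (Real.exp (β*v - v^2/2) - Real.exp (s*(v/r) - a*(Real.exp (v/r) - 1))) := by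
      rw [setIntegral_pos_iff_support_of_nonneg_ae hnn hint2]
      have hsub : Set.Ioi (0:ℝ) ⊆ Function.support (fun v =>
          Real.exp (β*v - v^2/2) - Real.exp (s*(v/r) - a*(Real.exp (v/r) - 1))) :=
        fun v hv => ne_of_gt (sub_pos.mpr (hWlt v hv))
      rw [Set.inter_eq_right.mpr hsub, Real.volume_Ioi]
      exact ENNReal.zero_lt_top
    rw [integral_sub hGint hWint] at hpos
    linarith
  rw [hrK, ← gaussQ β]
  exact hlt

open MeasureTheory in
theorem erlangC_gt_halfin_whitt (β a : ℝ) (hβ : 0 < β) (ha : 0 < a) :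
    (∫ t in Set.Ioi (0 : ℝ),
        (1 + t) ^ (a + β * Real.sqrt a) * (a * t / (1 + t)) * Real.exp (-a * t))⁻¹ >
      (1 + β *
        (∫ t in Set.Iic β, Real.exp (-t ^ 2 / 2) / Real.sqrt (2 * Real.pi)) /
          (Real.exp (-β ^ 2 / 2) / Real.sqrt (2 * Real.pi)))⁻¹ := by
  have hr : 0 < Real.sqrt a := Real.sqrt_pos.mpr ha
  have hr2 : (Real.sqrt a)^2 = a := Real.sq_sqrt ha.le
  have hval := erlang_value (β := β) (r := Real.sqrt a) ha hr
  have hkey := key_lt (a := a) (β := β) (r := Real.sqrt a) hβ ha hr hr2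
  set K : ℝ := ∫ t in Set.Ioi (0:ℝ),
    (1+t) ^ (a + β * Real.sqrt a - 1) * Real.exp (-(a*t)) with hKdef
  have hK0 : 0 ≤ K := by
    apply setIntegral_nonneg measurableSet_Ioi
    intro t ht
    have h1t : (0:ℝ) < 1 + t := by
      have : (0:ℝ) < t := ht
      linarith
    exact mul_nonneg (Real.rpow_nonneg h1t.le _) (Real.exp_nonneg _)
  set A : ℝ := ∫ t in Set.Iic β, Real.exp (-t^2/2) with hAdef
  have hsqrtpos : (0:ℝ) < Real.sqrt (2*Real.pi) := by
    have := Real.pi_pos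
    positivity
  have hRHS : 1 + β * (∫ t in Set.Iic β, Real.exp (-t^2/2) / Real.sqrt (2*Real.pi))
      / (Real.exp (-β^2/2) / Real.sqrt (2*Real.pi))
      = 1 + β * (Real.exp (β^2/2) * A) := by
    rw [integral_div, ← hAdef]
    have h2 : A / Real.sqrt (2*Real.pi) / (Real.exp (-β^2/2) / Real.sqrt (2*Real.pi))
        = A * Real.exp (β^2/2) := by
      rw [div_div_div_comm, div_self hsqrtpos.ne', div_one, div_eq_mul_inv, ← Real.exp_neg]
      congr 2
      ring
    rw [mul_div_assoc, h2]
    ring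
  have hIpos : 0 < 1 + (β * Real.sqrt a) * K := by
    have : 0 ≤ (β * Real.sqrt a) * K := mul_nonneg (mul_nonneg hβ.le hr.le) hK0
    linarith
  have hABlt : 1 + (β * Real.sqrt a) * K < 1 + β * (Real.exp (β^2/2) * A) := by
    have h1 : Real.sqrt a * K < Real.exp (β^2/2) * A := hkey
    nlinarith
  rw [gt_iff_lt, hRHS, hval]
  exact inv_strictAnti₀ hIpos hABlt
end

section
/- For fixed β > 0, the map a ↦ E[(1+X_a)^{β√a}] is strictly increasing on (0,∞), where X_a has density g(t,a) = a·t·e^{−a t}·(1+t)^{a−1} on (0,∞). -/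
open Real Set Filter MeasureTheory

lemma one_add_pos' {t : ℝ} (ht : 0 < t) : (0:ℝ) < 1 + t := by linarith

lemma log_lt_self' {t : ℝ} (ht : 0 < t) : Real.log (1 + t) < t := by
  have := Real.log_lt_sub_one_of_pos (by linarith : (0:ℝ) < 1 + t) (by linarith)
  linarith

lemma log_pos' {t : ℝ} (ht : 0 < t) : 0 < Real.log (1 + t) :=
  Real.log_pos (by linarith)

lemma h_pos {t : ℝ} (ht : 0 < t) : 0 < t - Real.log (1 + t) := by
  linarith [log_lt_self' ht]

lemma log_gt_div {t : ℝ} (ht : 0 < t) : t / (1 + t) < Real.log (1 + t) := by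
  have h1 : (0:ℝ) < 1 + t := by linarith
  have := Real.log_lt_sub_one_of_pos (show (0:ℝ) < (1+t)⁻¹ by positivity)
    (by
      intro h
      have : (1:ℝ)+t = 1 := by
        field_simp at h; linarith [h]
      linarith)
  rw [Real.log_inv] at this
  have h2 : (1+t)⁻¹ - 1 = -(t/(1+t)) := by field_simp; ring
  linarith [h2 ▸ this]

lemma hasDerivAt_log1p {t : ℝ} (ht : 0 < t) :
    HasDerivAt (fun x : ℝ => Real.log (1 + x)) (1 / (1 + t)) t := by
  have : HasDerivAt (fun x : ℝ => 1 + x) 1 t := (hasDerivAt_id t).const_add 1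
  simpa [Function.comp_def] using (Real.hasDerivAt_log (by linarith : (1:ℝ)+t ≠ 0)).comp t this

lemma key_ineq {t : ℝ} (ht : 0 < t) : 2 * t < (2 + t) * Real.log (1 + t) := by
  set f : ℝ → ℝ := fun x => (2 + x) * Real.log (1 + x) - 2 * x with hf
  have hderiv : ∀ x ∈ interior (Ici (0:ℝ)), 0 < deriv f x := by
    intro x hx
    rw [interior_Ici] at hx
    have hx0 : 0 < x := hx
    have hd : HasDerivAt f (1 * Real.log (1+x) + (2+x) * (1/(1+x)) - 2) x := by
      exact (((hasDerivAt_id x).const_add 2).mul (hasDerivAt_log1p hx0)).sub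
        (by simpa using (hasDerivAt_id x).const_mul (2:ℝ))
    rw [hd.deriv]
    have h1 : (0:ℝ) < 1 + x := by linarith
    have h2 := log_gt_div hx0
    have h3 : (2+x) * (1/(1+x)) - 2 = -(x/(1+x)) := by field_simp; ring
    linarith
  have hcont : ContinuousOn f (Ici 0) := by
    apply ContinuousOn.sub
    · exact (continuousOn_const.add continuousOn_id).mul
        ((continuousOn_const.add continuousOn_id).log (fun x hx => by
          simp only [Set.mem_Ici] at hx; simp only [Pi.add_apply, id]; intro h; linarith))
    · exact continuousOn_const.mul continuousOn_id
  have hmono := strictMonoOn_of_deriv_pos (convex_Ici 0) hcont hderiv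
  have := hmono (Set.self_mem_Ici) (Set.mem_Ici.2 ht.le) ht
  simp [hf] at this
  linarith

lemma q_strictAnti :
    StrictAntiOn (fun t : ℝ => (Real.log (1+t))^2 / (t - Real.log (1+t))) (Ioi 0) := by
  apply strictAntiOn_of_deriv_neg (convex_Ioi 0)
  · apply ContinuousOn.div
    · exact (((continuousOn_const.add continuousOn_id).log (fun x hx => by
        simp only [Set.mem_Ioi, Pi.add_apply, id] at hx ⊢; intro h; linarith)).pow 2)
    · exact continuousOn_id.sub ((continuousOn_const.add continuousOn_id).log
        (fun x hx => by simp only [Set.mem_Ioi, Pi.add_apply, id] at hx ⊢; intro h; linarith))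
    · intro x hx; exact (h_pos hx).ne'
  · intro x hx
    rw [interior_Ioi] at hx
    have hx0 : 0 < x := hx
    have h1 : (0:ℝ) < 1 + x := by linarith
    have hL := hasDerivAt_log1p hx0
    have hLpos := log_pos' hx0
    have hhpos := h_pos hx0
    set L := Real.log (1 + x) with hLdef
    have hnum : HasDerivAt (fun t : ℝ => (Real.log (1+t))^2) (2 * L * (1/(1+x))) x := by
      simpa [hLdef, mul_comm, mul_assoc] using (hL.fun_pow 2)
    have hden : HasDerivAt (fun t : ℝ => t - Real.log (1+t)) (1 - 1/(1+x)) x :=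
      (hasDerivAt_id x).sub hL
    have hd := hnum.fun_div hden hhpos.ne'
    rw [hd.deriv]
    apply div_neg_of_neg_of_pos
    · have hkey := key_ineq hx0
      have e1 : 2 * L * (1/(1+x)) * (x - L) - L^2 * (1 - 1/(1+x))
          = (L / (1+x)) * (2*x - (2+x)*L) := by field_simp; ring
      rw [e1]
      apply mul_neg_of_pos_of_neg (by positivity)
      linarith
    · positivity

lemma crossing_lt {s t : ℝ} (hs : 0 < s) (hst : s < t) :
    (Real.log (1+t))^2 * (s - Real.log (1+s)) < (Real.log (1+s))^2 * (t - Real.log (1+t)) := by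
  have ht0 : 0 < t := hs.trans hst
  have h1 := q_strictAnti (Set.mem_Ioi.2 hs) (Set.mem_Ioi.2 ht0) hst
  have h2 := h_pos hs
  have h3 := h_pos ht0
  rw [div_lt_div_iff₀ h3 h2] at h1
  linarith

noncomputable def Hfun (t : ℝ) : ℝ := t - Real.log (1 + max t 0)

lemma Hfun_of_nonneg {t : ℝ} (ht : 0 ≤ t) : Hfun t = t - Real.log (1 + t) := by
  simp [Hfun, max_eq_left ht]

lemma Hfun_of_nonpos {t : ℝ} (ht : t ≤ 0) : Hfun t = t := by
  simp [Hfun, max_eq_right ht]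

lemma Hfun_zero : Hfun 0 = 0 := by simp [Hfun]

lemma continuous_Hfun : Continuous Hfun := by
  apply continuous_id.sub
  apply (continuous_const.add (continuous_id.max continuous_const)).log
  intro x
  have : (0:ℝ) ≤ max x 0 := le_max_right _ _
  simp only [Pi.add_apply, id]
  positivity

lemma hasDerivAt_Hfun {x : ℝ} (hx : 0 < x) :
    HasDerivAt Hfun (x / (1 + x)) x := by
  have hd : HasDerivAt (fun t : ℝ => t - Real.log (1 + t)) (1 - 1/(1+x)) x :=
    (hasDerivAt_id x).sub (hasDerivAt_log1p hx)
  have hev : Hfun =ᶠ[nhds x] (fun t : ℝ => t - Real.log (1 + t)) := by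
    filter_upwards [IsOpen.mem_nhds isOpen_Ioi (Set.mem_Ioi.2 hx)] with t ht
    exact Hfun_of_nonneg (le_of_lt ht)
  have : HasDerivAt Hfun (1 - 1/(1+x)) x := hd.congr_of_eventuallyEq hev
  convert this using 1
  field_simp; ring

lemma strictMonoOn_Hfun_Ici : StrictMonoOn Hfun (Ici 0) := by
  apply strictMonoOn_of_deriv_pos (convex_Ici 0) (continuous_Hfun.continuousOn)
  intro x hx
  rw [interior_Ici] at hx
  have hx' : (0:ℝ) < x := hx
  rw [(hasDerivAt_Hfun hx').deriv]
  have : (0:ℝ) < 1 + x := by linarith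
  positivity

lemma strictMono_Hfun : StrictMono Hfun := by
  intro x y hxy
  rcases le_or_gt 0 x with hx | hx
  · exact strictMonoOn_Hfun_Ici hx (le_trans hx hxy.le) hxy
  · rw [Hfun_of_nonpos hx.le]
    rcases le_or_gt y 0 with hy | hy
    · rw [Hfun_of_nonpos hy]; exact hxy
    · calc x < 0 := hx
        _ = Hfun 0 := Hfun_zero.symm
        _ < Hfun y := strictMonoOn_Hfun_Ici Set.self_mem_Ici hy.le hy

lemma log1p_le_sqrt {t : ℝ} (ht : 0 ≤ t) : Real.log (1 + t) ≤ 2 * Real.sqrt (1 + t) := by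
  have h1 : (0:ℝ) < 1 + t := by linarith
  have h2 : Real.log (1 + t) = 2 * Real.log (Real.sqrt (1 + t)) := by
    rw [Real.log_sqrt h1.le]; ring
  have h3 : Real.log (Real.sqrt (1 + t)) ≤ Real.sqrt (1 + t) - 1 :=
    Real.log_le_sub_one_of_pos (Real.sqrt_pos.2 h1)
  nlinarith [Real.sqrt_nonneg (1 + t)]

lemma tendsto_Hfun_atTop : Tendsto Hfun atTop atTop := by
  apply tendsto_atTop_mono' _ (_ : ∀ᶠ t in atTop, t / 2 ≤ Hfun t)
  · exact (tendsto_id.atTop_div_const two_pos)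
  · filter_upwards [eventually_ge_atTop (32:ℝ)] with t ht
    have ht0 : (0:ℝ) ≤ t := by linarith
    rw [Hfun_of_nonneg ht0]
    have h1 : Real.sqrt (1 + t) ≤ t / 4 := by
      rw [show t / 4 = Real.sqrt ((t/4)^2) by rw [Real.sqrt_sq (by linarith)]]
      apply Real.sqrt_le_sqrt
      nlinarith
    have := log1p_le_sqrt ht0
    linarith

lemma tendsto_Hfun_atBot : Tendsto Hfun atBot atBot := by
  have : Hfun =ᶠ[atBot] id := by
    filter_upwards [eventually_le_atBot (0:ℝ)] with t ht
    exact Hfun_of_nonpos ht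
  exact tendsto_id.congr' this.symm

lemma surjective_Hfun : Function.Surjective Hfun :=
  continuous_Hfun.surjective tendsto_Hfun_atTop tendsto_Hfun_atBot

noncomputable def Hiso : ℝ ≃o ℝ :=
  StrictMono.orderIsoOfSurjective Hfun strictMono_Hfun surjective_Hfun

lemma Hiso_apply (t : ℝ) : Hiso t = Hfun t := rfl

lemma Hfun_Hiso_symm (y : ℝ) : Hfun (Hiso.symm y) = y :=
  StrictMono.orderIsoOfSurjective_self_symm_apply _ _ _ y

lemma Hiso_symm_pos {y : ℝ} (hy : 0 < y) : 0 < Hiso.symm y := by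
  have h0 : Hiso.symm 0 = 0 := by
    have : Hiso 0 = 0 := by rw [Hiso_apply, Hfun_zero]
    exact Hiso.symm_apply_eq.mpr this.symm
  rw [← h0]
  exact Hiso.symm.strictMono hy

lemma continuous_Hiso_symm : Continuous (Hiso.symm : ℝ → ℝ) :=
  OrderIso.continuous _

lemma hasDerivAt_Hiso_symm {y : ℝ} (hy : 0 < y) :
    HasDerivAt (fun z => (Hiso.symm z : ℝ)) ((Hiso.symm y / (1 + Hiso.symm y))⁻¹) y := by
  have hg : 0 < Hiso.symm y := Hiso_symm_pos hy
  apply HasDerivAt.of_local_left_inverse (continuous_Hiso_symm.continuousAt)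
    (hasDerivAt_Hfun hg)
  · have : (0:ℝ) < 1 + Hiso.symm y := by linarith
    positivity
  · filter_upwards with z; exact Hfun_Hiso_symm z

lemma continuousOn_F (c a : ℝ) :
    ContinuousOn (fun t : ℝ =>
      (1 + t) ^ c * (a * t * Real.exp (-a * t) * (1 + t) ^ (a - 1))) (Ici 0) := by
  have hbase : ContinuousOn (fun t : ℝ => 1 + t) (Ici 0) :=
    continuousOn_const.add continuousOn_id
  have hne : ∀ x ∈ Ici (0:ℝ), 1 + x ≠ 0 ∨ (0:ℝ) ≤ c := by
    intro x hx; left; simp only [mem_Ici] at hx; intro h; linarith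
  apply ContinuousOn.mul
  · exact hbase.rpow_const hne
  · apply ContinuousOn.mul
    · apply ContinuousOn.mul
      · exact continuousOn_const.mul continuousOn_id
      · exact (continuousOn_const.mul continuousOn_id).rexp
    · exact hbase.rpow_const (fun x hx => by
        left; simp only [mem_Ici] at hx; intro h; linarith)

lemma integrableOn_F {c a : ℝ} (ha : 0 < a) (hc : 0 ≤ c) :
    IntegrableOn (fun t : ℝ =>
      (1 + t) ^ c * (a * t * Real.exp (-a * t) * (1 + t) ^ (a - 1))) (Ioi 0) := by
  set p : ℝ := c + (a - 1) + 1 with hp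
  have hppos : 0 < p := by simp [hp]; linarith
  have hIoi1 : IntegrableOn (fun t : ℝ =>
      (1 + t) ^ c * (a * t * Real.exp (-a * t) * (1 + t) ^ (a - 1))) (Ioi 1) := by
    have hbase : IntegrableOn (fun x : ℝ => x ^ p * Real.exp (-a * x)) (Ioi 1) := by
      have := integrableOn_rpow_mul_exp_neg_mul_rpow (p := 1) (s := p) (b := a)
        (by linarith) zero_lt_one ha
      simp only [Real.rpow_one] at this
      exact this.mono_set (Ioi_subset_Ioi zero_le_one)
    apply Integrable.mono' ((hbase.const_mul (a * 2 ^ p)))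
    · exact ((continuousOn_F c a).mono (Ioi_subset_Ici (by norm_num))).aestronglyMeasurable
        measurableSet_Ioi
    · filter_upwards [ae_restrict_mem measurableSet_Ioi] with t ht
      simp only [mem_Ioi] at ht
      have h1 : (0:ℝ) < 1 + t := by linarith
      have ht0 : (0:ℝ) < t := by linarith
      rw [Real.norm_eq_abs, abs_of_nonneg (by positivity)]
      have e1 : (1 + t) ^ c * (a * t * Real.exp (-a * t) * (1 + t) ^ (a - 1))
          = a * (t * (1 + t) ^ (c + (a-1))) * Real.exp (-a * t) := by
        rw [Real.rpow_add h1]; ring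
      rw [e1]
      have h2 : t * (1 + t) ^ (c + (a-1)) ≤ (1 + t) ^ p := by
        rw [hp, Real.rpow_add_one h1.ne']
        have hX : 0 ≤ (1+t)^(c+(a-1)) := Real.rpow_nonneg h1.le _
        nlinarith
      have h3 : (1 + t) ^ p ≤ 2 ^ p * t ^ p := by
        rw [← Real.mul_rpow (by norm_num) ht0.le]
        exact Real.rpow_le_rpow h1.le (by linarith) hppos.le
      have hexp : (0:ℝ) < Real.exp (-a * t) := Real.exp_pos _
      calc a * (t * (1 + t) ^ (c + (a-1))) * Real.exp (-a * t)
          ≤ a * (2 ^ p * t ^ p) * Real.exp (-a * t) := by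
            apply mul_le_mul_of_nonneg_right _ hexp.le
            exact mul_le_mul_of_nonneg_left (h2.trans h3) ha.le
        _ = a * 2 ^ p * (t ^ p * Real.exp (-a * t)) := by ring
  have hIoc : IntegrableOn (fun t : ℝ =>
      (1 + t) ^ c * (a * t * Real.exp (-a * t) * (1 + t) ^ (a - 1))) (Ioc 0 1) := by
    apply IntegrableOn.mono_set _ (Ioc_subset_Icc_self)
    exact ((continuousOn_F c a).mono (Icc_subset_Ici_self)).integrableOn_compact isCompact_Icc
  have : Ioc (0:ℝ) 1 ∪ Ioi 1 = Ioi 0 := Ioc_union_Ioi_eq_Ioi zero_le_one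
  rw [← this]
  exact hIoc.union hIoi1

open MeasureTheory in
theorem moment_strictMono (β : ℝ) (hβ : 0 < β) :
    StrictMonoOn
      (fun a : ℝ => ∫ t in Set.Ioi (0 : ℝ),
        (1 + t) ^ (β * Real.sqrt a) * (a * t * Real.exp (-a * t) * (1 + t) ^ (a - 1)))
      (Set.Ioi 0) := by
  intro a ha b hb hab
  simp only [Set.mem_Ioi] at ha hb
  set c : ℝ := a / b with hc
  have hc0 : 0 < c := div_pos ha hb
  have hc1 : c < 1 := (div_lt_one hb).2 hab
  set σ : ℝ → ℝ := fun u => Hiso.symm (c * Hfun u) with hσ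
  -- basic facts about σ on Ioi 0
  have hHu_pos : ∀ {u : ℝ}, 0 < u → 0 < Hfun u := by
    intro u hu; rw [Hfun_of_nonneg hu.le]; exact h_pos hu
  have hσpos : ∀ {u : ℝ}, 0 < u → 0 < σ u := fun hu =>
    Hiso_symm_pos (mul_pos hc0 (hHu_pos hu))
  have hσrel : ∀ u : ℝ, Hfun (σ u) = c * Hfun u := fun u => Hfun_Hiso_symm _
  have hσlt : ∀ {u : ℝ}, 0 < u → σ u < u := by
    intro u hu
    have h1 : Hfun (σ u) < Hfun u := by
      rw [hσrel u]
      nlinarith [hHu_pos hu]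
    exact strictMono_Hfun.lt_iff_lt.1 h1
  have hσmono : StrictMono σ := by
    intro x y hxy
    exact Hiso.symm.strictMono (by
      have := strictMono_Hfun hxy
      nlinarith)
  -- derivative of σ
  set D : ℝ → ℝ := fun u => (σ u / (1 + σ u))⁻¹ * (c * (u / (1 + u))) with hD
  have hσderiv : ∀ {u : ℝ}, 0 < u → HasDerivAt σ (D u) u := by
    intro u hu
    have h1 : HasDerivAt (fun u : ℝ => c * Hfun u) (c * (u / (1 + u))) u := by
      have hH : HasDerivAt Hfun (u / (1 + u)) u := by
        have hd : HasDerivAt (fun t : ℝ => t - Real.log (1 + t)) (1 - 1/(1+u)) u :=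
          (hasDerivAt_id u).sub (hasDerivAt_log1p hu)
        have hev : Hfun =ᶠ[nhds u] (fun t : ℝ => t - Real.log (1 + t)) := by
          filter_upwards [IsOpen.mem_nhds isOpen_Ioi (Set.mem_Ioi.2 hu)] with t ht
          exact Hfun_of_nonneg (le_of_lt ht)
        have : HasDerivAt Hfun (1 - 1/(1+u)) u := hd.congr_of_eventuallyEq hev
        convert this using 1
        field_simp; ring
      exact hH.const_mul c
    have h2 := hasDerivAt_Hiso_symm (mul_pos hc0 (hHu_pos hu))
    exact h2.comp u h1
  -- image of Ioi 0 under σ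
  have himg : σ '' (Ioi 0) = Ioi 0 := by
    apply Set.eq_of_subset_of_subset
    · rintro y ⟨u, hu, rfl⟩
      exact hσpos hu
    · intro y hy
      simp only [Set.mem_Ioi] at hy
      refine ⟨Hiso.symm (c⁻¹ * Hfun y), Hiso_symm_pos (mul_pos (by positivity) (hHu_pos hy)), ?_⟩
      simp only [hσ]
      rw [Hfun_Hiso_symm, ← mul_assoc, mul_inv_cancel₀ hc0.ne', one_mul, ← Hiso_apply,
        OrderIso.symm_apply_apply]
  -- change of variables
  set Fb : ℝ → ℝ := fun t =>
    (1 + t) ^ (β * Real.sqrt b) * (b * t * Real.exp (-b * t) * (1 + t) ^ (b - 1)) with hFb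
  set Fa : ℝ → ℝ := fun t =>
    (1 + t) ^ (β * Real.sqrt a) * (a * t * Real.exp (-a * t) * (1 + t) ^ (a - 1)) with hFa
  have hderivW : ∀ u ∈ Ioi (0:ℝ), HasDerivWithinAt σ (D u) (Ioi 0) u :=
    fun u hu => (hσderiv hu).hasDerivWithinAt
  have hinj : InjOn σ (Ioi 0) := hσmono.injective.injOn
  have hchg : ∫ t in Ioi (0:ℝ), Fb t = ∫ u in Ioi (0:ℝ), |D u| • Fb (σ u) := by
    have h := integral_image_eq_integral_abs_deriv_smul measurableSet_Ioi hderivW hinj Fb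
    rwa [himg] at h
  have hFbint : IntegrableOn Fb (Ioi 0) := integrableOn_F hb (by positivity)
  have hFaint : IntegrableOn Fa (Ioi 0) := integrableOn_F ha (by positivity)
  have hGint : IntegrableOn (fun u => |D u| • Fb (σ u)) (Ioi 0) := by
    rw [← integrableOn_image_iff_integrableOn_abs_deriv_smul measurableSet_Ioi hderivW hinj Fb,
      himg]
    exact hFbint
  -- pointwise inequality
  have hpt : ∀ u ∈ Ioi (0:ℝ), Fa u < |D u| • Fb (σ u) := by
    intro u hu
    simp only [Set.mem_Ioi] at hu
    set s : ℝ := σ u with hs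
    have hspos : 0 < s := hσpos hu
    have hsu : s < u := hσlt hu
    have h1u : (0:ℝ) < 1 + u := by linarith
    have h1s : (0:ℝ) < 1 + s := by linarith
    have hLu : 0 < Real.log (1 + u) := log_pos' hu
    have hLs : 0 < Real.log (1 + s) := log_pos' hspos
    -- the h-relation in explicit form
    have hrel : s - Real.log (1 + s) = c * (u - Real.log (1 + u)) := by
      have := hσrel u
      rw [Hfun_of_nonneg hspos.le, Hfun_of_nonneg hu.le] at this
      exact this
    have hrelb : b * (s - Real.log (1+s)) = a * (u - Real.log (1+u)) := by
      rw [hrel, hc]; field_simp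
    -- exponent inequality
    have hexp_lt : Real.sqrt a * Real.log (1+u) < Real.sqrt b * Real.log (1+s) := by
      have hcross := crossing_lt hspos hsu
      have hhu := h_pos hu
      have hsq : a * (Real.log (1+u))^2 < b * (Real.log (1+s))^2 := by
        have h2 : (Real.log (1+u))^2 * (s - Real.log (1+s))
            = (Real.log (1+u))^2 * (c * (u - Real.log (1+u))) := by rw [hrel]
        rw [h2] at hcross
        have hb' : (0:ℝ) < b := hb
        rw [hc] at hcross
        have := mul_lt_mul_of_pos_left hcross hb'
        have hexp : b * ((Real.log (1+u))^2 * (a/b * (u - Real.log (1+u))))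
            = a * (Real.log (1+u))^2 * (u - Real.log (1+u)) := by field_simp
        nlinarith
      have h3 : (Real.sqrt a * Real.log (1+u))^2 < (Real.sqrt b * Real.log (1+s))^2 := by
        rw [mul_pow, mul_pow, Real.sq_sqrt ha.le, Real.sq_sqrt hb.le]
        exact hsq
      exact lt_of_pow_lt_pow_left₀ 2 (by positivity) h3
    have hrpow_lt : (1+u) ^ (β * Real.sqrt a) < (1+s) ^ (β * Real.sqrt b) := by
      rw [Real.rpow_def_of_pos h1u, Real.rpow_def_of_pos h1s]
      apply Real.exp_lt_exp.2
      calc Real.log (1+u) * (β * Real.sqrt a) = β * (Real.sqrt a * Real.log (1+u)) := by ring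
        _ < β * (Real.sqrt b * Real.log (1+s)) := by
            exact mul_lt_mul_of_pos_left hexp_lt hβ
        _ = Real.log (1+s) * (β * Real.sqrt b) := by ring
    -- main algebraic identity
    have hA : Real.exp (-b * s) * (1+s) ^ b = Real.exp (-a * u) * (1+u) ^ a := by
      rw [Real.rpow_def_of_pos h1s, Real.rpow_def_of_pos h1u, ← Real.exp_add, ← Real.exp_add]
      congr 1
      linarith
    have hPs : (1+s) ^ (b-1) * (1+s) = (1+s) ^ b := by
      rw [← Real.rpow_add_one h1s.ne' (b-1)]; ring_nf
    have hPu : (1+u) ^ (a-1) * (1+u) = (1+u) ^ a := by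
      rw [← Real.rpow_add_one h1u.ne' (a-1)]; ring_nf
    have hDpos : 0 < D u := by
      have : 0 < s / (1 + s) := by positivity
      have : 0 < u / (1 + u) := by positivity
      simp only [hD]
      positivity
    have hidentity : |D u| * (b * s * Real.exp (-b * s) * (1+s) ^ (b-1))
        = a * u * Real.exp (-a * u) * (1+u) ^ (a-1) := by
      rw [abs_of_pos hDpos]
      simp only [hD, hc]
      have hbne : (b:ℝ) ≠ 0 := hb.ne'
      have h1 : (s / (1 + s))⁻¹ = (1+s)/s := by field_simp
      rw [h1]
      -- reduce to hA
      have e1 : (1+s)/s * (a/b * (u/(1+u))) * (b * s * Real.exp (-b*s) * (1+s)^(b-1))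
          = (a * u / (1+u)) * (Real.exp (-b*s) * ((1+s)^(b-1) * (1+s))) := by
        field_simp
      rw [e1, hPs, hA]
      have e2 : a * u / (1+u) * (Real.exp (-a*u) * (1+u)^a)
          = a * u * Real.exp (-a*u) * ((1+u)^a / (1+u)) := by ring
      rw [e2, ← hPu]
      field_simp
    have hRpos : 0 < a * u * Real.exp (-a * u) * (1+u) ^ (a-1) := by positivity
    calc Fa u = (1+u) ^ (β * Real.sqrt a) * (a * u * Real.exp (-a*u) * (1+u)^(a-1)) := rfl
      _ < (1+s) ^ (β * Real.sqrt b) * (a * u * Real.exp (-a*u) * (1+u)^(a-1)) :=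
          mul_lt_mul_of_pos_right hrpow_lt hRpos
      _ = (1+s) ^ (β * Real.sqrt b) * (|D u| * (b * s * Real.exp (-b*s) * (1+s)^(b-1))) := by
          rw [hidentity]
      _ = |D u| • Fb (σ u) := by
          simp only [hFb, smul_eq_mul, ← hs]; ring
  -- conclude
  have hsub : 0 < ∫ u in Ioi (0:ℝ), (|D u| • Fb (σ u) - Fa u) := by
    rw [setIntegral_pos_iff_support_of_nonneg_ae]
    · apply lt_of_lt_of_le (by norm_num : (0:ENNReal) < ⊤)
      have hv : volume (Ioi (0:ℝ)) = ⊤ := Real.volume_Ioi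
      rw [← hv]
      apply measure_mono
      intro x hx
      simp only [Set.mem_Ioi] at hx
      refine ⟨?_, hx⟩
      simp only [Function.mem_support]
      have := hpt x hx
      intro h
      rw [sub_eq_zero] at h
      rw [h] at this
      exact lt_irrefl _ this
    · filter_upwards [ae_restrict_mem measurableSet_Ioi] with x hx
      have := hpt x hx
      simp only [Pi.zero_apply]
      linarith [this]
    · exact hGint.sub hFaint
  have hint_eq : ∫ u in Ioi (0:ℝ), (|D u| • Fb (σ u) - Fa u)
      = (∫ u in Ioi (0:ℝ), |D u| • Fb (σ u)) - ∫ u in Ioi (0:ℝ), Fa u :=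
    integral_sub hGint hFaint
  show (∫ t in Ioi (0:ℝ), Fa t) < ∫ t in Ioi (0:ℝ), Fb t
  calc (∫ t in Ioi (0:ℝ), Fa t) < ∫ u in Ioi (0:ℝ), |D u| • Fb (σ u) := by
        rw [hint_eq] at hsub; linarith
    _ = ∫ t in Ioi (0:ℝ), Fb t := hchg.symm
end
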